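/- arXiv:2112.14505 — 2 statements merged into one kernel-verified Lean document; each statement's English description precedes it below -/
import Mathlib

section
/- Let s ∈ (0,1), m > 0, and g: ℝ^N\{0} → ℝ locally integrable and nonnegative. Then for any R ≥ m^{1/N}, the minimization problem inf{ P_s(E) + V_g(E) : E ⊆ Q_R measurable, |E| = m } admits a minimizer, where Q_R is the cube of side length R. -/
open MeasureTheory ENNReal Set

noncomputable def fracKer (N : ℕ) (s : ℝ) (x : EuclideanSpace ℝ (Fin N)) : ℝ≥0∞ :=
  ENNReal.ofReal (‖x‖ ^ (-((N : ℝ) + s)))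

noncomputable def fracPer (N : ℕ) (s : ℝ) (E : Set (EuclideanSpace ℝ (Fin N))) : ℝ≥0∞ :=
  ∫⁻ x in E, ∫⁻ y in Eᶜ, fracKer N s (x - y)

noncomputable def rieszPot (N : ℕ) (g : EuclideanSpace ℝ (Fin N) → ℝ)
    (E : Set (EuclideanSpace ℝ (Fin N))) : ℝ≥0∞ :=
  ∫⁻ x in E, ∫⁻ y in E, ENNReal.ofReal (g (x - y))

/-- The (closed) cube of side length `R` centered at the origin. -/
def cube (N : ℕ) (R : ℝ) : Set (EuclideanSpace ℝ (Fin N)) :=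
  {x | ∀ i : Fin N, |x i| ≤ R / 2}

open Filter Topology

namespace FracMin

variable {N : ℕ} {s : ℝ}

local notation "X" => EuclideanSpace ℝ (Fin N)

/-! ### Generalities -/

lemma measurable_coord (i : Fin N) : Measurable fun x : X => x i :=
  (measurable_pi_apply i).comp (MeasurableEquiv.toLp 2 (Fin N → ℝ)).symm.measurable

lemma measurable_fracKerP (N : ℕ) (s : ℝ) :
    Measurable fun p : EuclideanSpace ℝ (Fin N) × EuclideanSpace ℝ (Fin N) =>
      fracKer N s (p.1 - p.2) := by
  have h1 : Measurable fun p : EuclideanSpace ℝ (Fin N) × EuclideanSpace ℝ (Fin N) =>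
      ‖p.1 - p.2‖ := (continuous_fst.sub continuous_snd).norm.measurable
  have h2 : Measurable fun t : ℝ => ENNReal.ofReal (t ^ (-((N : ℝ) + s))) := by measurability
  exact h2.comp h1

lemma quasiMeasurePreserving_fst :
    Measure.QuasiMeasurePreserving (Prod.fst : X × X → X)
      ((volume : Measure X).prod volume) volume := by
  refine ⟨measurable_fst, ?_⟩
  rw [Measure.map_fst_prod]
  exact Measure.AbsolutelyContinuous.mk fun s hs h0 => by simp [h0]

lemma quasiMeasurePreserving_snd :
    Measure.QuasiMeasurePreserving (Prod.snd : X × X → X)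
      ((volume : Measure X).prod volume) volume := by
  refine ⟨measurable_snd, ?_⟩
  rw [Measure.map_snd_prod]
  exact Measure.AbsolutelyContinuous.mk fun s hs h0 => by simp [h0]

lemma aemeasurable_gker (g : X → ℝ) (hg : AEMeasurable g (volume : Measure X)) :
    AEMeasurable (fun p : X × X => ENNReal.ofReal (g (p.1 - p.2)))
      ((volume : Measure X).prod volume) := by
  have h1 : AEMeasurable (fun p : X × X => g p.1) ((volume : Measure X).prod volume) :=
    hg.comp_quasiMeasurePreserving quasiMeasurePreserving_fst
  have hS : MeasurePreserving (fun z : X × X => (z.1 - z.2, z.2))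
      ((volume : Measure X).prod volume) ((volume : Measure X).prod volume) :=
    measurePreserving_sub_prod volume volume
  have h2 : AEMeasurable (fun p : X × X => g (p.1 - p.2)) ((volume : Measure X).prod volume) :=
    h1.comp_quasiMeasurePreserving hS.quasiMeasurePreserving
  exact h2.ennreal_ofReal

/-- Transfer an a.e. property to both coordinates on the product. -/
lemma ae_prod_of_ae (p : X → Prop) (hp : ∀ᵐ x ∂(volume : Measure X), p x) :
    ∀ᵐ q ∂((volume : Measure X).prod volume), p q.1 ∧ p q.2 :=
  (quasiMeasurePreserving_fst.ae hp).and (quasiMeasurePreserving_snd.ae hp)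

lemma setProd_lintegral (A B : Set X) (hA : MeasurableSet A) (hB : MeasurableSet B)
    (k : X × X → ℝ≥0∞) (hk : AEMeasurable k ((volume : Measure X).prod volume)) :
    ∫⁻ p, (A ×ˢ B).indicator k p ∂((volume : Measure X).prod volume) =
      ∫⁻ x in A, ∫⁻ y in B, k (x, y) := by
  have hk' : AEMeasurable k (((volume : Measure X).restrict A).prod (volume.restrict B)) := by
    rw [Measure.prod_restrict]; exact hk.restrict
  rw [lintegral_indicator (hA.prod hB), ← Measure.prod_restrict, lintegral_prod _ hk']

lemma fracPer_eq_prod (A : Set X) (hA : MeasurableSet A) :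
    fracPer N s A = ∫⁻ p, (A ×ˢ Aᶜ).indicator
      (fun p : X × X => fracKer N s (p.1 - p.2)) p ∂((volume : Measure X).prod volume) := by
  rw [setProd_lintegral A Aᶜ hA hA.compl _ (measurable_fracKerP N s).aemeasurable]; rfl

lemma rieszPot_eq_prod (g : X → ℝ) (hg : AEMeasurable g (volume : Measure X))
    (A : Set X) (hA : MeasurableSet A) :
    rieszPot N g A = ∫⁻ p, (A ×ˢ A).indicator
      (fun p : X × X => ENNReal.ofReal (g (p.1 - p.2))) p ∂((volume : Measure X).prod volume) := by
  rw [setProd_lintegral A A hA hA _ (aemeasurable_gker g hg)]; rfl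

/-! ### Volumes of boxes -/

lemma volume_pi_set (S : Fin N → Set ℝ) (hS : ∀ i, MeasurableSet (S i)) :
    volume {x : X | ∀ i, x i ∈ S i} = ∏ i, volume (S i) := by
  have h : {x : X | ∀ i, x i ∈ S i} =
      ((MeasurableEquiv.toLp 2 (Fin N → ℝ)).symm) ⁻¹' (Set.pi univ S) := by
    ext x; simp [Set.mem_pi]
  rw [h, (EuclideanSpace.volume_preserving_symm_measurableEquiv_toLp (Fin N)).measure_preimage
    (MeasurableSet.univ_pi hS).nullMeasurableSet, volume_pi_pi]

lemma volume_boxIco (a b : Fin N → ℝ) :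
    volume {x : X | ∀ i, x i ∈ Ico (a i) (b i)} = ∏ i, ENNReal.ofReal (b i - a i) := by
  rw [volume_pi_set _ (fun i => measurableSet_Ico)]
  simp [Real.volume_Ico]

lemma volume_boxIcc (a b : Fin N → ℝ) :
    volume {x : X | ∀ i, x i ∈ Icc (a i) (b i)} = ∏ i, ENNReal.ofReal (b i - a i) := by
  rw [volume_pi_set _ (fun i => measurableSet_Icc)]
  simp [Real.volume_Icc]

lemma measurableSet_boxIcc (a b : Fin N → ℝ) :
    MeasurableSet {x : X | ∀ i, x i ∈ Icc (a i) (b i)} := by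
  have : {x : X | ∀ i, x i ∈ Icc (a i) (b i)} =
      ⋂ i, (fun x : X => x i) ⁻¹' Icc (a i) (b i) := by ext x; simp
  rw [this]
  exact MeasurableSet.iInter fun i => (measurable_coord i) measurableSet_Icc

lemma volume_coordEq (i : Fin N) (c : ℝ) : volume {x : X | x i = c} = 0 := by
  have h : {x : X | x i = c} = {x : X | ∀ j, x j ∈ Function.update (fun _ : Fin N => (univ : Set ℝ)) i {c} j} := by
    ext x
    constructor
    · intro hx j
      rcases eq_or_ne j i with rfl | hj
      · simpa using hx
      · simp [Function.update_of_ne hj]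
    · intro hx
      have := hx i
      simpa using this
  rw [h, volume_pi_set]
  · refine Finset.prod_eq_zero (Finset.mem_univ i) ?_
    simp
  · intro j
    rcases eq_or_ne j i with rfl | hj
    · simp
    · simp [Function.update_of_ne hj]

lemma cube_eq (R : ℝ) : cube N R = {x : X | ∀ i, x i ∈ Icc (-(R/2)) (R/2)} := by
  ext x; simp [cube, abs_le, mem_Icc]

lemma measurableSet_cube (R : ℝ) : MeasurableSet (cube N R) := by
  rw [cube_eq]
  have : {x : X | ∀ i, x i ∈ Icc (-(R/2)) (R/2)} =
      ⋂ i, (fun x : X => x i) ⁻¹' Icc (-(R/2)) (R/2) := by ext x; simp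
  rw [this]
  exact MeasurableSet.iInter fun i => (measurable_coord i) measurableSet_Icc

lemma volume_cube (R : ℝ) (hR : 0 ≤ R) : volume (cube N R) = ENNReal.ofReal R ^ N := by
  rw [cube_eq, volume_boxIcc]
  have : ENNReal.ofReal (R/2 - -(R/2)) = ENNReal.ofReal R := by
    congr 1; ring
  simp only [this, Finset.prod_const, Finset.card_univ, Fintype.card_fin]

/-! ### The grid -/

variable (N R : ℝ) in
/-- grid box at scale `k` (side `R/(k+1)`), position `v`. -/
def gbox (N : ℕ) (R : ℝ) (k : ℕ) (v : Fin N → Fin (k+1)) : Set (EuclideanSpace ℝ (Fin N)) :=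
  {x | ∀ i, x i ∈ Ico (-(R/2) + (v i : ℝ) * (R/(k+1))) (-(R/2) + ((v i : ℝ) + 1) * (R/(k+1)))}

lemma measurableSet_gbox (R : ℝ) (k : ℕ) (v : Fin N → Fin (k+1)) :
    MeasurableSet (gbox N R k v) := by
  have : gbox N R k v = ⋂ i, (fun x : X => x i) ⁻¹'
      Ico (-(R/2) + (v i : ℝ) * (R/(k+1))) (-(R/2) + ((v i : ℝ) + 1) * (R/(k+1))) := by
    ext x; simp [gbox]
  rw [this]
  exact MeasurableSet.iInter fun i => (measurable_coord i) measurableSet_Ico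

lemma volume_gbox (R : ℝ) (k : ℕ) (v : Fin N → Fin (k+1)) :
    volume (gbox N R k v) = ENNReal.ofReal (R/(k+1)) ^ N := by
  rw [gbox, volume_boxIco]
  have h : ∀ i : Fin N, ENNReal.ofReal ((-(R/2) + ((v i : ℝ) + 1) * (R/(k+1))) -
      (-(R/2) + (v i : ℝ) * (R/(k+1)))) = ENNReal.ofReal (R/(k+1)) := by
    intro i; congr 1; ring
  rw [Finset.prod_congr rfl fun i _ => h i]
  simp

lemma gbox_disjoint (R : ℝ) (hR : 0 < R) (k : ℕ) : Pairwise fun v w : Fin N → Fin (k+1) =>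
    Disjoint (gbox N R k v) (gbox N R k w) := by
  have hδ : 0 < R / (k+1) := div_pos hR (by positivity)
  intro v w hvw
  obtain ⟨i, hi⟩ : ∃ i, v i ≠ w i := by
    by_contra h
    push_neg at h
    exact hvw (funext h)
  rw [Set.disjoint_left]
  rintro x hx hx'
  have h1 := hx i
  have h2 := hx' i
  simp only [mem_Ico] at h1 h2
  have key : ∀ a b : Fin (k+1), (a : ℕ) < b →
      -(R/2) + ((a : ℝ) + 1) * (R/(k+1)) ≤ -(R/2) + (b : ℝ) * (R/(k+1)) := by
    intro a b hab
    have : (a : ℝ) + 1 ≤ (b : ℝ) := by exact_mod_cast hab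
    nlinarith
  rcases lt_or_gt_of_ne (fun h => hi (Fin.ext h)) with h | h
  · have := key _ _ h; linarith [h1.2, h2.1]
  · have := key _ _ h; linarith [h2.2, h1.1]

lemma gbox_subset_cube (R : ℝ) (hR : 0 < R) (k : ℕ) (v : Fin N → Fin (k+1)) :
    gbox N R k v ⊆ cube N R := by
  have hδ : 0 < R / (k+1) := div_pos hR (by positivity)
  intro x hx i
  have h := hx i
  simp only [mem_Ico] at h
  have hv0 : (0 : ℝ) ≤ (v i : ℝ) := Nat.cast_nonneg _
  have hv1 : (v i : ℝ) + 1 ≤ (k : ℝ) + 1 := by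
    have : (v i : ℕ) < k + 1 := (v i).2
    have : (v i : ℝ) ≤ (k : ℝ) := by exact_mod_cast Nat.lt_succ_iff.mp this
    linarith
  have hlow : -(R/2) ≤ x i := by nlinarith
  have hup : x i ≤ R/2 := by
    have : ((v i : ℝ) + 1) * (R/(k+1)) ≤ ((k : ℝ) + 1) * (R/(k+1)) :=
      mul_le_mul_of_nonneg_right hv1 hδ.le
    have hkk : ((k : ℝ) + 1) * (R/(k+1)) = R := by
      field_simp
    nlinarith [h.2]
  rw [abs_le]
  exact ⟨by linarith, hup⟩

lemma gbox_cover (R : ℝ) (hR : 0 < R) (k : ℕ) :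
    cube N R \ (⋃ v : Fin N → Fin (k+1), gbox N R k v) ⊆ ⋃ i : Fin N, {x : X | x i = R/2} := by
  have hδ : 0 < R / (k+1) := div_pos hR (by positivity)
  intro x hx
  simp only [mem_diff, mem_iUnion, not_exists] at hx
  obtain ⟨hxc, hxn⟩ := hx
  by_contra hcon
  simp only [mem_iUnion, mem_setOf_eq, not_exists] at hcon
  -- then every coordinate is < R/2 and we can find a grid box containing x
  have hlt : ∀ i, x i < R/2 := by
    intro i
    rcases lt_or_eq_of_le (abs_le.mp (hxc i)).2 with h | h
    · exact h
    · exact absurd h (hcon i)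
  set t : Fin N → ℝ := fun i => (x i + R/2) / (R/(k+1)) with ht
  have ht0 : ∀ i, 0 ≤ t i := by
    intro i
    have := (abs_le.mp (hxc i)).1
    have : 0 ≤ x i + R/2 := by linarith
    positivity
  have htk : ∀ i, t i < (k : ℝ) + 1 := by
    intro i
    have h2 : x i + R/2 < R := by have := hlt i; linarith
    rw [ht]
    rw [div_lt_iff₀ hδ]
    have : ((k:ℝ)+1) * (R/(k+1)) = R := by field_simp
    linarith [this]
  set v : Fin N → Fin (k+1) := fun i => ⟨Nat.floor (t i), by
    have := htk i
    have h := Nat.floor_lt (ht0 i) |>.mpr (by exact_mod_cast this)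
    exact_mod_cast h⟩ with hv
  refine hxn v ?_
  intro i
  have hfl : ((v i : ℕ) : ℝ) ≤ t i := Nat.floor_le (ht0 i)
  have hfu : t i < ((v i : ℕ) : ℝ) + 1 := Nat.lt_floor_add_one (t i)
  simp only [mem_Ico]
  constructor
  · have : ((v i : ℕ) : ℝ) * (R/(k+1)) ≤ t i * (R/(k+1)) := mul_le_mul_of_nonneg_right hfl hδ.le
    have htt : t i * (R/(k+1)) = x i + R/2 := by
      rw [ht]; field_simp
    nlinarith
  · have : t i * (R/(k+1)) < (((v i : ℕ) : ℝ) + 1) * (R/(k+1)) := by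
      exact mul_lt_mul_of_pos_right hfu hδ
    have htt : t i * (R/(k+1)) = x i + R/2 := by
      rw [ht]; field_simp
    nlinarith

lemma gbox_diam (R : ℝ) (hR : 0 < R) (k : ℕ) (v : Fin N → Fin (k+1))
    {x y : X} (hx : x ∈ gbox N R k v) (hy : y ∈ gbox N R k v) :
    ‖x - y‖ ≤ Real.sqrt N * (R/(k+1)) := by
  have hδ : 0 < R / (k+1) := div_pos hR (by positivity)
  have hcoord : ∀ i, |x i - y i| ≤ R/(k+1) := by
    intro i
    have h1 := hx i
    have h2 := hy i
    simp only [mem_Ico] at h1 h2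
    rw [abs_le]
    constructor <;> nlinarith [h1.1, h1.2, h2.1, h2.2]
  have hnorm : ‖x - y‖ = Real.sqrt (∑ i, (x i - y i)^2) := by
    rw [EuclideanSpace.norm_eq]
    congr 1
    refine Finset.sum_congr rfl fun i _ => ?_
    rw [show (x - y) i = x i - y i from rfl]
    rw [Real.norm_eq_abs, sq_abs]
  rw [hnorm]
  have hb : (∑ i, (x i - y i)^2) ≤ (N : ℝ) * (R/(k+1))^2 := by
    calc (∑ i, (x i - y i)^2) ≤ ∑ _i : Fin N, (R/(k+1))^2 := by
          refine Finset.sum_le_sum fun i _ => ?_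
          have := hcoord i
          nlinarith [abs_nonneg (x i - y i), sq_abs (x i - y i)]
      _ = (N : ℝ) * (R/(k+1))^2 := by simp [Finset.sum_const, Finset.card_univ, mul_comm]
  calc Real.sqrt (∑ i, (x i - y i)^2) ≤ Real.sqrt ((N : ℝ) * (R/(k+1))^2) := Real.sqrt_le_sqrt hb
    _ = Real.sqrt N * (R/(k+1)) := by
        rw [Real.sqrt_mul (Nat.cast_nonneg N), Real.sqrt_sq hδ.le]

/-! ### Key estimates -/

lemma volume_singleton_zero (hN : 0 < N) (x : X) : volume ({x} : Set X) = 0 := by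
  have h : ({x} : Set X) ⊆ {z : X | z ⟨0, hN⟩ = x ⟨0, hN⟩} := by
    rintro z rfl; rfl
  exact measure_mono_null h (volume_coordEq _ _)

/-- Kernel lower bound: the product of measures is controlled by the interaction energy. -/
lemma prod_measure_le_kernel (hN : 0 < N) (hs : 0 < s) (A Q : Set X) (hA : MeasurableSet A)
    (hQ : MeasurableSet Q) (d : ℝ) (hd : 0 < d)
    (hdiam : ∀ x ∈ Q, ∀ y ∈ Q, ‖x - y‖ ≤ d) :
    volume (A ∩ Q) * volume (Q \ A) ≤
      ENNReal.ofReal (d ^ ((N : ℝ) + s)) *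
        ∫⁻ x in A ∩ Q, ∫⁻ y in Aᶜ, fracKer N s (x - y) := by
  set c : ℝ := (N : ℝ) + s with hc
  have hc0 : 0 < c := by positivity
  set C : ℝ≥0∞ := ENNReal.ofReal (d ^ c) with hC
  have hCne : C ≠ ⊤ := ENNReal.ofReal_ne_top
  -- inner pointwise estimate
  have hinner : ∀ x ∈ A ∩ Q, volume (Q \ A) ≤ C * ∫⁻ y in Aᶜ, fracKer N s (x - y) := by
    intro x hx
    have hxQ : x ∈ Q := hx.2
    have h1 : volume (Q \ A) = ∫⁻ _ in Q \ A, (1 : ℝ≥0∞) := by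
      rw [setLIntegral_one]
    have h2 : (∫⁻ _ in Q \ A, (1 : ℝ≥0∞)) ≤ ∫⁻ y in Q \ A, C * fracKer N s (x - y) := by
      apply lintegral_mono_ae
      have hne : ∀ᵐ y ∂(volume : Measure X).restrict (Q \ A), y ≠ x := by
        refine ae_restrict_of_ae ?_
        have : {y : X | ¬ y ≠ x} = {x} := by ext y; simp [eq_comm]
        rw [ae_iff, this]
        exact volume_singleton_zero hN x
      filter_upwards [ae_restrict_mem (hQ.diff hA), hne] with y hy hyx
      have hyQ : y ∈ Q := hy.1
      have hnorm_le : ‖x - y‖ ≤ d := hdiam x hxQ y hyQ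
      have hnorm_pos : 0 < ‖x - y‖ := by
        rw [norm_pos_iff]
        exact sub_ne_zero_of_ne (Ne.symm hyx)
      rw [fracKer, ← ENNReal.ofReal_mul (by positivity)]
      rw [show (1 : ℝ≥0∞) = ENNReal.ofReal 1 by simp]
      apply ENNReal.ofReal_le_ofReal
      rw [Real.rpow_neg hnorm_pos.le]
      show (1:ℝ) ≤ d ^ c * (‖x - y‖ ^ c)⁻¹
      have hpow : ‖x - y‖ ^ c ≤ d ^ c := Real.rpow_le_rpow hnorm_pos.le hnorm_le hc0.le
      have hpow_pos : 0 < ‖x - y‖ ^ c := Real.rpow_pos_of_pos hnorm_pos c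
      rw [← div_eq_mul_inv, le_div_iff₀ hpow_pos, one_mul]
      exact hpow
    have h3 : (∫⁻ y in Q \ A, C * fracKer N s (x - y)) =
        C * ∫⁻ y in Q \ A, fracKer N s (x - y) := lintegral_const_mul' _ _ hCne
    have h4 : (∫⁻ y in Q \ A, fracKer N s (x - y)) ≤ ∫⁻ y in Aᶜ, fracKer N s (x - y) :=
      lintegral_mono_set (diff_subset_compl Q A)
    calc volume (Q \ A) ≤ C * ∫⁻ y in Q \ A, fracKer N s (x - y) := by
          rw [h1]; exact h2.trans h3.le
      _ ≤ C * ∫⁻ y in Aᶜ, fracKer N s (x - y) := mul_le_mul_right h4 _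
  calc volume (A ∩ Q) * volume (Q \ A) = ∫⁻ _ in A ∩ Q, volume (Q \ A) := by
        rw [setLIntegral_const, mul_comm]
    _ ≤ ∫⁻ x in A ∩ Q, C * ∫⁻ y in Aᶜ, fracKer N s (x - y) := by
        apply lintegral_mono_ae
        filter_upwards [ae_restrict_mem (hA.inter hQ)] with x hx
        exact hinner x hx
    _ = C * ∫⁻ x in A ∩ Q, ∫⁻ y in Aᶜ, fracKer N s (x - y) := lintegral_const_mul' _ _ hCne

lemma cube_osc_aux (hN : 0 < N) (hs : 0 < s) (A B Q : Set X) (hA : MeasurableSet A)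
    (hB : MeasurableSet B)
    (hQ : MeasurableSet Q) (hQfin : volume Q ≠ ⊤) (d : ℝ) (hd : 0 < d)
    (hdiam : ∀ x ∈ Q, ∀ y ∈ Q, ‖x - y‖ ≤ d)
    (hba : volume (B ∩ Q) ≤ volume (A ∩ Q)) :
    volume Q * volume ((symmDiff A B) ∩ Q) ≤
      volume Q * ((volume (A ∩ Q) - volume (B ∩ Q)) + (volume (B ∩ Q) - volume (A ∩ Q))) +
      2 * ENNReal.ofReal (d ^ ((N : ℝ) + s)) *
        ((∫⁻ x in A ∩ Q, ∫⁻ y in Aᶜ, fracKer N s (x - y)) +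
         (∫⁻ x in B ∩ Q, ∫⁻ y in Bᶜ, fracKer N s (x - y))) := by
  set q := volume Q with hq
  set a := volume (A ∩ Q) with hadef
  set b := volume (B ∩ Q) with hbdef
  set cc := volume (A ∩ B ∩ Q) with hcdef
  set u := volume ((A \ B) ∩ Q) with hudef
  set v := volume ((B \ A) ∩ Q) with hvdef
  set SA := ∫⁻ x in A ∩ Q, ∫⁻ y in Aᶜ, fracKer N s (x - y) with hSA
  set SB := ∫⁻ x in B ∩ Q, ∫⁻ y in Bᶜ, fracKer N s (x - y) with hSB
  set C : ℝ≥0∞ := ENNReal.ofReal (d ^ ((N : ℝ) + s)) with hC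
  have haq : a ≤ q := measure_mono inter_subset_right
  have hbq : b ≤ q := measure_mono inter_subset_right
  have haT : a ≠ ⊤ := (haq.trans_lt (lt_top_iff_ne_top.2 hQfin)).ne
  have hbT : b ≠ ⊤ := (hbq.trans_lt (lt_top_iff_ne_top.2 hQfin)).ne
  -- decompositions
  have hsplit : volume (symmDiff A B ∩ Q) = u + v := by
    have hset : symmDiff A B ∩ Q = ((A \ B) ∩ Q) ∪ ((B \ A) ∩ Q) := by
      rw [Set.symmDiff_def]; ext x
      simp only [mem_inter_iff, mem_union, mem_diff]
      tauto
    rw [hset, measure_union _ ((hB.diff hA).inter hQ)]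
    exact Disjoint.mono inter_subset_left inter_subset_left disjoint_sdiff_sdiff
  have hau : a = u + cc := by
    have hset : A ∩ Q = ((A \ B) ∩ Q) ∪ (A ∩ B ∩ Q) := by
      ext x
      simp only [mem_inter_iff, mem_union, mem_diff]
      tauto
    rw [hadef, hset, measure_union _ ((hA.inter hB).inter hQ)]
    exact Disjoint.mono inter_subset_left inter_subset_left
      (disjoint_sdiff_left.mono_right inter_subset_right)
  have hbv : b = v + cc := by
    have hset : B ∩ Q = ((B \ A) ∩ Q) ∪ (A ∩ B ∩ Q) := by
      ext x
      simp only [mem_inter_iff, mem_union, mem_diff]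
      tauto
    rw [hbdef, hset, measure_union _ ((hA.inter hB).inter hQ)]
    exact Disjoint.mono inter_subset_left inter_subset_left
      (disjoint_sdiff_left.mono_right inter_subset_left)
  have hcT : cc ≠ ⊤ := by
    intro h
    rw [hbv, h] at hbT
    simp at hbT
  have hvb : v ≤ b := by rw [hbv]; exact self_le_add_right _ _
  have hQA : volume (Q \ A) = q - a := by
    have : Q \ A = Q \ (A ∩ Q) := by ext x; simp only [mem_diff, mem_inter_iff]; tauto
    rw [this, measure_diff inter_subset_right (hA.inter hQ).nullMeasurableSet haT]
  have hQB : volume (Q \ B) = q - b := by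
    have : Q \ B = Q \ (B ∩ Q) := by ext x; simp only [mem_diff, mem_inter_iff]; tauto
    rw [this, measure_diff inter_subset_right (hB.inter hQ).nullMeasurableSet hbT]
  have hvqa : v ≤ q - a := by
    rw [← hQA]
    exact measure_mono fun x hx => ⟨hx.2, fun hxA => hx.1.2 hxA⟩
  -- u = (a - b) + v
  have huab : u = (a - b) + v := by
    have h1 : u + b = a + v := by
      rw [hau, hbv]; ring
    have h2 : ((a - b) + v) + b = a + v := by
      rw [add_right_comm, tsub_add_cancel_of_le hba]
    have h3 := h1.trans h2.symm
    exact (ENNReal.add_left_inj hbT).mp h3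
  -- kernel bounds
  have hkerA : a * (q - a) ≤ C * SA := by
    rw [← hQA]
    exact prod_measure_le_kernel hN hs A Q hA hQ d hd hdiam
  have hkerB : b * (q - b) ≤ C * SB := by
    rw [← hQB]
    exact prod_measure_le_kernel hN hs B Q hB hQ d hd hdiam
  -- q * v bound
  have hqv : q * v ≤ C * SA + C * SB := by
    have hqsplit : q = a + (q - a) := (add_tsub_cancel_of_le haq).symm
    calc q * v = a * v + (q - a) * v := by rw [← add_mul, ← hqsplit]
      _ ≤ a * (q - a) + (q - a) * b := add_le_add (mul_le_mul_right hvqa _) (mul_le_mul_right hvb _)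
      _ ≤ a * (q - a) + (q - b) * b := by
          exact add_le_add_right (mul_le_mul_left (tsub_le_tsub_left hba q) _) _
      _ = a * (q - a) + b * (q - b) := by rw [mul_comm (q - b)]
      _ ≤ C * SA + C * SB := add_le_add hkerA hkerB
  -- put together
  have hba0 : b - a = 0 := tsub_eq_zero_of_le hba
  calc q * volume (symmDiff A B ∩ Q) = q * ((a - b) + v + v) := by
        rw [hsplit, huab]
    _ = q * (a - b) + (q * v + q * v) := by ring
    _ ≤ q * (a - b) + (2 * (C * SA + C * SB)) := by
        rw [two_mul]
        exact add_le_add_right (add_le_add hqv hqv) _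
    _ = q * ((a - b) + (b - a)) + 2 * C * (SA + SB) := by
        rw [hba0]; ring

/-- the per-cube oscillation estimate. -/
lemma cube_osc (hN : 0 < N) (hs : 0 < s) (A B Q : Set X) (hA : MeasurableSet A) (hB : MeasurableSet B)
    (hQ : MeasurableSet Q) (hQfin : volume Q ≠ ⊤) (d : ℝ) (hd : 0 < d)
    (hdiam : ∀ x ∈ Q, ∀ y ∈ Q, ‖x - y‖ ≤ d) :
    volume Q * volume ((symmDiff A B) ∩ Q) ≤
      volume Q * ((volume (A ∩ Q) - volume (B ∩ Q)) + (volume (B ∩ Q) - volume (A ∩ Q))) +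
      2 * ENNReal.ofReal (d ^ ((N : ℝ) + s)) *
        ((∫⁻ x in A ∩ Q, ∫⁻ y in Aᶜ, fracKer N s (x - y)) +
         (∫⁻ x in B ∩ Q, ∫⁻ y in Bᶜ, fracKer N s (x - y))) := by
  rcases le_total (volume (B ∩ Q)) (volume (A ∩ Q)) with hba | hab
  · exact cube_osc_aux hN hs A B Q hA hB hQ hQfin d hd hdiam hba
  · have h := cube_osc_aux hN hs B A Q hB hA hQ hQfin d hd hdiam hab
    rw [symmDiff_comm] at h
    calc volume Q * volume (symmDiff A B ∩ Q) ≤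
        volume Q * ((volume (B ∩ Q) - volume (A ∩ Q)) + (volume (A ∩ Q) - volume (B ∩ Q))) +
          2 * ENNReal.ofReal (d ^ ((N : ℝ) + s)) *
          ((∫⁻ x in B ∩ Q, ∫⁻ y in Bᶜ, fracKer N s (x - y)) +
           (∫⁻ x in A ∩ Q, ∫⁻ y in Aᶜ, fracKer N s (x - y))) := h
      _ = _ := by rw [add_comm (volume (B ∩ Q) - volume (A ∩ Q)),
            add_comm (∫⁻ x in B ∩ Q, ∫⁻ y in Bᶜ, fracKer N s (x - y))]

/-! ### summed grid estimate -/

lemma null_cover (R : ℝ) (hR : 0 < R) (k : ℕ) :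
    volume (cube N R \ ⋃ v : Fin N → Fin (k+1), gbox N R k v) = 0 := by
  refine measure_mono_null (gbox_cover R hR k) (measure_iUnion_null fun i => volume_coordEq i _)

lemma grid_est (hN : 0 < N) (hs : 0 < s) (R : ℝ) (hR : 0 < R) (k : ℕ)
    (A B : Set X) (hA : MeasurableSet A) (hB : MeasurableSet B)
    (hAc : A ⊆ cube N R) (hBc : B ⊆ cube N R) :
    volume (symmDiff A B) ≤
      (∑ v : Fin N → Fin (k+1),
        ((volume (A ∩ gbox N R k v) - volume (B ∩ gbox N R k v)) +
         (volume (B ∩ gbox N R k v) - volume (A ∩ gbox N R k v)))) +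
      (2 * ENNReal.ofReal ((Real.sqrt N * (R/(k+1))) ^ ((N : ℝ) + s)) /
         (ENNReal.ofReal (R/(k+1)) ^ N)) * (fracPer N s A + fracPer N s B) := by
  have hδ : 0 < R / (k+1) := div_pos hR (by positivity)
  set δ := R / (k+1) with hδdef
  set d := Real.sqrt N * δ with hd_def
  have hd : 0 < d := by
    have : (0:ℝ) < Real.sqrt N := Real.sqrt_pos.2 (by exact_mod_cast hN)
    positivity
  set q : ℝ≥0∞ := ENNReal.ofReal δ ^ N with hq_def
  have hq0 : q ≠ 0 := by
    rw [hq_def]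
    exact pow_ne_zero _ (by simp [ENNReal.ofReal_pos.2 hδ] ; positivity)
  have hqT : q ≠ ⊤ := by
    rw [hq_def]; exact (ENNReal.pow_ne_top ENNReal.ofReal_ne_top)
  set C : ℝ≥0∞ := ENNReal.ofReal (d ^ ((N : ℝ) + s)) with hC
  -- per-box estimates, divided by q
  have hbox : ∀ v : Fin N → Fin (k+1),
      volume (symmDiff A B ∩ gbox N R k v) ≤
        ((volume (A ∩ gbox N R k v) - volume (B ∩ gbox N R k v)) +
         (volume (B ∩ gbox N R k v) - volume (A ∩ gbox N R k v))) +
        (2 * C * ((∫⁻ x in A ∩ gbox N R k v, ∫⁻ y in Aᶜ, fracKer N s (x - y)) +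
         (∫⁻ x in B ∩ gbox N R k v, ∫⁻ y in Bᶜ, fracKer N s (x - y)))) / q := by
    intro v
    have hQvol : volume (gbox N R k v) = q := volume_gbox R k v
    have hosc := cube_osc hN hs A B (gbox N R k v) hA hB (measurableSet_gbox R k v)
      (by rw [hQvol]; exact hqT) d hd
      (fun x hx y hy => gbox_diam R hR k v hx hy)
    rw [hQvol] at hosc
    set W := (volume (A ∩ gbox N R k v) - volume (B ∩ gbox N R k v)) +
         (volume (B ∩ gbox N R k v) - volume (A ∩ gbox N R k v)) with hW
    set Z := 2 * C * ((∫⁻ x in A ∩ gbox N R k v, ∫⁻ y in Aᶜ, fracKer N s (x - y)) +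
         (∫⁻ x in B ∩ gbox N R k v, ∫⁻ y in Bᶜ, fracKer N s (x - y))) with hZ
    have h1 : volume (symmDiff A B ∩ gbox N R k v) =
        q * volume (symmDiff A B ∩ gbox N R k v) / q := by
      rw [mul_comm, mul_div_assoc, ENNReal.div_self hq0 hqT, mul_one]
    rw [h1]
    calc q * volume (symmDiff A B ∩ gbox N R k v) / q ≤ (q * W + Z) / q :=
        ENNReal.div_le_div_right hosc q
      _ = q * W / q + Z / q := ENNReal.add_div
      _ = W + Z / q := by rw [mul_comm q W, mul_div_assoc, ENNReal.div_self hq0 hqT, mul_one]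
  -- sum up
  have hcover : volume (symmDiff A B) ≤
      ∑ v : Fin N → Fin (k+1), volume (symmDiff A B ∩ gbox N R k v) := by
    have hsub : symmDiff A B ⊆
        (⋃ v : Fin N → Fin (k+1), symmDiff A B ∩ gbox N R k v) ∪
        (cube N R \ ⋃ v : Fin N → Fin (k+1), gbox N R k v) := by
      intro x hx
      have hxc : x ∈ cube N R := by
        rcases hx with h | h
        · exact hAc h.1
        · exact hBc h.1
      by_cases hxg : x ∈ ⋃ v : Fin N → Fin (k+1), gbox N R k v
      · rcases mem_iUnion.1 hxg with ⟨v, hv⟩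
        exact Or.inl (mem_iUnion.2 ⟨v, hx, hv⟩)
      · exact Or.inr ⟨hxc, hxg⟩
    calc volume (symmDiff A B) ≤
        volume ((⋃ v : Fin N → Fin (k+1), symmDiff A B ∩ gbox N R k v) ∪
          (cube N R \ ⋃ v : Fin N → Fin (k+1), gbox N R k v)) := measure_mono hsub
      _ ≤ volume (⋃ v : Fin N → Fin (k+1), symmDiff A B ∩ gbox N R k v) +
          volume (cube N R \ ⋃ v : Fin N → Fin (k+1), gbox N R k v) := measure_union_le _ _
      _ = volume (⋃ v : Fin N → Fin (k+1), symmDiff A B ∩ gbox N R k v) := by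
          rw [null_cover R hR k, add_zero]
      _ ≤ ∑' v : Fin N → Fin (k+1), volume (symmDiff A B ∩ gbox N R k v) := measure_iUnion_le _
      _ = ∑ v : Fin N → Fin (k+1), volume (symmDiff A B ∩ gbox N R k v) := tsum_fintype _
  -- energy sums
  have hSA : ∑ v : Fin N → Fin (k+1),
      (∫⁻ x in A ∩ gbox N R k v, ∫⁻ y in Aᶜ, fracKer N s (x - y)) ≤ fracPer N s A := by
    rw [← tsum_fintype (L := SummationFilter.unconditional _)]
    rw [← lintegral_iUnion (fun v => hA.inter (measurableSet_gbox R k v))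
      ((gbox_disjoint R hR k).mono fun v w h =>
        h.mono inter_subset_right inter_subset_right)]
    exact lintegral_mono_set (iUnion_subset fun v => inter_subset_left)
  have hSB : ∑ v : Fin N → Fin (k+1),
      (∫⁻ x in B ∩ gbox N R k v, ∫⁻ y in Bᶜ, fracKer N s (x - y)) ≤ fracPer N s B := by
    rw [← tsum_fintype (L := SummationFilter.unconditional _)]
    rw [← lintegral_iUnion (fun v => hB.inter (measurableSet_gbox R k v))
      ((gbox_disjoint R hR k).mono fun v w h =>
        h.mono inter_subset_right inter_subset_right)]
    exact lintegral_mono_set (iUnion_subset fun v => inter_subset_left)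
  calc volume (symmDiff A B) ≤
      ∑ v : Fin N → Fin (k+1), volume (symmDiff A B ∩ gbox N R k v) := hcover
    _ ≤ ∑ v : Fin N → Fin (k+1),
        (((volume (A ∩ gbox N R k v) - volume (B ∩ gbox N R k v)) +
         (volume (B ∩ gbox N R k v) - volume (A ∩ gbox N R k v))) +
        (2 * C * ((∫⁻ x in A ∩ gbox N R k v, ∫⁻ y in Aᶜ, fracKer N s (x - y)) +
         (∫⁻ x in B ∩ gbox N R k v, ∫⁻ y in Bᶜ, fracKer N s (x - y)))) / q) :=
        Finset.sum_le_sum fun v _ => hbox v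
    _ = (∑ v : Fin N → Fin (k+1),
        ((volume (A ∩ gbox N R k v) - volume (B ∩ gbox N R k v)) +
         (volume (B ∩ gbox N R k v) - volume (A ∩ gbox N R k v)))) +
        (∑ v : Fin N → Fin (k+1),
          2 * C * ((∫⁻ x in A ∩ gbox N R k v, ∫⁻ y in Aᶜ, fracKer N s (x - y)) +
           (∫⁻ x in B ∩ gbox N R k v, ∫⁻ y in Bᶜ, fracKer N s (x - y)))) / q := by
        rw [Finset.sum_add_distrib]
        congr 1
        simp only [div_eq_mul_inv]
        rw [← Finset.sum_mul]
    _ ≤ _ := by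
        refine add_le_add_right ?_ _
        have hsum : (∑ v : Fin N → Fin (k+1),
            2 * C * ((∫⁻ x in A ∩ gbox N R k v, ∫⁻ y in Aᶜ, fracKer N s (x - y)) +
             (∫⁻ x in B ∩ gbox N R k v, ∫⁻ y in Bᶜ, fracKer N s (x - y)))) ≤
            2 * C * (fracPer N s A + fracPer N s B) := by
          rw [← Finset.mul_sum, Finset.sum_add_distrib]
          exact mul_le_mul_right (add_le_add hSA hSB) _
        calc (∑ v : Fin N → Fin (k+1),
            2 * C * ((∫⁻ x in A ∩ gbox N R k v, ∫⁻ y in Aᶜ, fracKer N s (x - y)) +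
             (∫⁻ x in B ∩ gbox N R k v, ∫⁻ y in Bᶜ, fracKer N s (x - y)))) / q ≤
            (2 * C * (fracPer N s A + fracPer N s B)) / q :=
              ENNReal.div_le_div_right hsum q
          _ = 2 * C / q * (fracPer N s A + fracPer N s B) := by
              rw [div_eq_mul_inv, div_eq_mul_inv]; ring

/-- The constant in the grid estimate, simplified. -/
lemma grid_const_eq (hN : 0 < N) (hs : 0 < s) (R : ℝ) (hR : 0 < R) (k : ℕ) :
    2 * ENNReal.ofReal ((Real.sqrt N * (R/(k+1))) ^ ((N : ℝ) + s)) /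
      (ENNReal.ofReal (R/(k+1)) ^ N) =
    2 * ENNReal.ofReal ((Real.sqrt N) ^ ((N : ℝ) + s)) * ENNReal.ofReal ((R/(k+1)) ^ s) := by
  have hδ : 0 < R / (k+1) := div_pos hR (by positivity)
  set δ := R / (k+1) with hδdef
  have hsqrt : (0:ℝ) < Real.sqrt N := Real.sqrt_pos.2 (by exact_mod_cast hN)
  have h1 : (Real.sqrt N * δ) ^ ((N : ℝ) + s) =
      (Real.sqrt N) ^ ((N : ℝ) + s) * (δ ^ (N : ℕ) * δ ^ s) := by
    rw [Real.mul_rpow hsqrt.le hδ.le, Real.rpow_add hδ, Real.rpow_natCast]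
  have h2 : ENNReal.ofReal δ ^ N = ENNReal.ofReal (δ ^ (N:ℕ)) := by
    rw [ENNReal.ofReal_pow hδ.le]
  rw [h1, h2]
  rw [ENNReal.ofReal_mul (by positivity), ENNReal.ofReal_mul (by positivity)]
  rw [show (2:ℝ≥0∞) * (ENNReal.ofReal ((Real.sqrt N) ^ ((N : ℝ) + s)) *
      (ENNReal.ofReal (δ ^ (N:ℕ)) * ENNReal.ofReal (δ ^ s))) =
    (2 * ENNReal.ofReal ((Real.sqrt N) ^ ((N : ℝ) + s)) * ENNReal.ofReal (δ ^ s)) *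
      ENNReal.ofReal (δ ^ (N:ℕ)) by ring]
  rw [mul_div_assoc, ENNReal.div_self (ENNReal.ofReal_pos.2 (by positivity)).ne'
    ENNReal.ofReal_ne_top, mul_one]

lemma grid_const_tendsto (hN : 0 < N) (hs : 0 < s) (R : ℝ) (hR : 0 < R) :
    Filter.Tendsto (fun k : ℕ =>
      2 * ENNReal.ofReal ((Real.sqrt N * (R/(k+1))) ^ ((N : ℝ) + s)) /
        (ENNReal.ofReal (R/(k+1)) ^ N)) Filter.atTop (𝓝 0) := by
  have heq : ∀ k : ℕ, 2 * ENNReal.ofReal ((Real.sqrt N * (R/(k+1))) ^ ((N : ℝ) + s)) /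
        (ENNReal.ofReal (R/(k+1)) ^ N) =
      2 * ENNReal.ofReal ((Real.sqrt N) ^ ((N : ℝ) + s)) * ENNReal.ofReal ((R/(k+1)) ^ s) :=
    fun k => grid_const_eq hN hs R hR k
  simp only [heq]
  have hδ : Filter.Tendsto (fun k : ℕ => R / ((k:ℝ)+1)) Filter.atTop (𝓝 0) := by
    have := tendsto_one_div_add_atTop_nhds_zero_nat (𝕜 := ℝ)
    have h := this.const_mul R
    simpa [div_eq_mul_inv, mul_comm] using h
  have hrpow : Filter.Tendsto (fun k : ℕ => (R / ((k:ℝ)+1)) ^ s) Filter.atTop (𝓝 0) := by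
    have hcont : ContinuousAt (fun x : ℝ => x ^ s) 0 :=
      Real.continuousAt_rpow_const 0 s (Or.inr hs.le)
    have := hcont.tendsto.comp hδ
    simpa [Function.comp_def, Real.zero_rpow hs.ne'] using this
  have hofReal : Filter.Tendsto (fun k : ℕ => ENNReal.ofReal ((R/((k:ℝ)+1)) ^ s))
      Filter.atTop (𝓝 0) := by
    have := (ENNReal.continuous_ofReal.tendsto 0).comp hrpow
    simpa [Function.comp_def] using this
  have := ENNReal.Tendsto.const_mul hofReal
    (Or.inr (by finiteness : 2 * ENNReal.ofReal ((Real.sqrt N) ^ ((N : ℝ) + s)) ≠ ⊤))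
  simpa using this

/-! ### a.e. convergence from summable symmetric differences -/

lemma liminf_set_ae (F : ℕ → Set X)
    (hsum : ∑' i, volume (symmDiff (F i) (F (i+1))) ≠ ⊤) :
    ∀ᵐ x ∂(volume : Measure X),
      ∀ᶠ i in atTop, (x ∈ F i ↔ x ∈ ⋃ n, ⋂ i, ⋂ (_ : n ≤ i), F i) := by
  set E₀ := ⋃ n, ⋂ i, ⋂ (_ : n ≤ i), F i with hE₀
  have hlim : volume (limsup (fun i => symmDiff (F i) (F (i+1))) atTop) = 0 :=
    measure_limsup_atTop_eq_zero hsum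
  have hae : ∀ᵐ x ∂(volume : Measure X), ∀ᶠ i in atTop, x ∉ symmDiff (F i) (F (i+1)) := by
    rw [ae_iff]
    refine measure_mono_null ?_ hlim
    intro x hx
    simp only [mem_setOf_eq, not_eventually, not_not] at hx
    exact mem_limsup_iff_frequently_mem.2 hx
  filter_upwards [hae] with x hx
  obtain ⟨n₀, hn₀⟩ := eventually_atTop.1 hx
  have hiff : ∀ i, i ≥ n₀ → (x ∈ F i ↔ x ∈ F n₀) := by
    intro i hi
    induction i, hi using Nat.le_induction with
    | base => rfl
    | succ i hi ih =>
      have h := hn₀ i hi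
      rw [Set.mem_symmDiff] at h
      push_neg at h
      constructor
      · intro hxi
        exact ih.1 (by tauto)
      · intro hx0
        have := ih.2 hx0
        tauto
  have hEiff : x ∈ E₀ ↔ x ∈ F n₀ := by
    constructor
    · intro hxE
      rw [hE₀, mem_iUnion] at hxE
      obtain ⟨n, hn⟩ := hxE
      simp only [mem_iInter] at hn
      have h1 : x ∈ F (max n n₀) := hn _ (le_max_left _ _)
      exact (hiff _ (le_max_right _ _)).1 h1
    · intro hx0
      rw [hE₀, mem_iUnion]
      refine ⟨n₀, ?_⟩
      simp only [mem_iInter]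
      intro i hi
      exact (hiff i hi).2 hx0
  rw [eventually_atTop]
  exact ⟨n₀, fun i hi => by rw [hiff i hi, hEiff]⟩

end FracMin

open FracMin in
/-- for `g ≥ 0` locally integrable, `m > 0`, and `R ≥ m^{1/N}`, the problem
`inf { P_s(E) + V_g(E) : E ⊆ Q_R, |E| = m }` admits a minimizer. -/
theorem exists_minimizer_in_cube (N : ℕ) (hN : 0 < N) (s : ℝ) (hs : s ∈ Set.Ioo (0:ℝ) 1)
    (g : EuclideanSpace ℝ (Fin N) → ℝ)
    (hg0 : ∀ x : EuclideanSpace ℝ (Fin N), x ≠ 0 → 0 ≤ g x)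
    (hgloc : LocallyIntegrable g volume)
    (m : ℝ) (hm : 0 < m) (R : ℝ) (hR : m ^ ((N : ℝ)⁻¹) ≤ R) :
    ∃ E : Set (EuclideanSpace ℝ (Fin N)),
      E ⊆ cube N R ∧ MeasurableSet E ∧ volume E = ENNReal.ofReal m ∧
      ∀ F : Set (EuclideanSpace ℝ (Fin N)),
        F ⊆ cube N R → MeasurableSet F → volume F = ENNReal.ofReal m →
          fracPer N s E + rieszPot N g E ≤ fracPer N s F + rieszPot N g F := by
  classical
  obtain ⟨hs0, hs1⟩ := hs
  have hg_aem : AEMeasurable g (volume : Measure (EuclideanSpace ℝ (Fin N))) :=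
    hgloc.aestronglyMeasurable.aemeasurable
  have hRpos : 0 < R := lt_of_lt_of_le (Real.rpow_pos_of_pos hm _) hR
  have hmRN : m ≤ R ^ N := by
    have h1 : (m ^ ((N:ℝ)⁻¹)) ^ N = m := by
      rw [← Real.rpow_natCast (m ^ ((N:ℝ)⁻¹)) N, ← Real.rpow_mul hm.le,
        inv_mul_cancel₀ (by exact_mod_cast hN.ne' : (N:ℝ) ≠ 0), Real.rpow_one]
    calc m = (m ^ ((N:ℝ)⁻¹)) ^ N := h1.symm
      _ ≤ R ^ N := pow_le_pow_left₀ (Real.rpow_nonneg hm.le _) hR N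
  set Adm : Set (Set (EuclideanSpace ℝ (Fin N))) :=
    {F | F ⊆ cube N R ∧ MeasurableSet F ∧ volume F = ENNReal.ofReal m} with hAdm_def
  -- an admissible set exists
  have hAdm_ex : ∃ F, F ∈ Adm := by
    set i0 : Fin N := ⟨0, hN⟩
    set t : ℝ := m / R ^ (N - 1) with ht
    have hRN1 : (0:ℝ) < R ^ (N-1) := pow_pos hRpos _
    have htpos : 0 < t := div_pos hm hRN1
    have hRsplit : R ^ N = R ^ (N-1) * R := by
      conv_lhs => rw [← Nat.succ_pred_eq_of_pos hN]
      rw [pow_succ, Nat.pred_eq_sub_one]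
    have htR : t ≤ R := by
      rw [ht, div_le_iff₀ hRN1]
      calc m ≤ R ^ N := hmRN
        _ = R ^ (N-1) * R := hRsplit
        _ = R * R ^ (N-1) := mul_comm _ _
    set bb : Fin N → ℝ := fun i => if i = i0 then -(R/2) + t else R/2 with hbb
    refine ⟨{x | ∀ i, x i ∈ Icc (-(R/2)) (bb i)}, ?_, measurableSet_boxIcc _ _, ?_⟩
    · intro x hx i
      have h := hx i
      rw [abs_le]
      have hbile : bb i ≤ R/2 := by
        rw [hbb]; dsimp only
        split
        · linarith
        · exact le_rfl
      exact ⟨h.1, h.2.trans hbile⟩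
    · rw [show {x : EuclideanSpace ℝ (Fin N) | ∀ i, x i ∈ Icc (-(R/2)) (bb i)} =
          {x : EuclideanSpace ℝ (Fin N) | ∀ i, x i ∈ Icc ((fun _ => -(R/2)) i) (bb i)} from rfl,
        volume_boxIcc]
      rw [← Finset.mul_prod_erase Finset.univ _ (Finset.mem_univ i0)]
      have h0 : ENNReal.ofReal (bb i0 - -(R/2)) = ENNReal.ofReal t := by
        rw [hbb]; simp
      have h1 : ∀ i ∈ Finset.univ.erase i0, ENNReal.ofReal (bb i - -(R/2)) =
          ENNReal.ofReal R := by
        intro i hi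
        rw [hbb]; dsimp only
        rw [if_neg (Finset.mem_erase.1 hi).1]
        congr 1; ring
      rw [h0, Finset.prod_congr rfl h1, Finset.prod_const,
        Finset.card_erase_of_mem (Finset.mem_univ i0), Finset.card_univ, Fintype.card_fin,
        ← ENNReal.ofReal_pow hRpos.le, ← ENNReal.ofReal_mul htpos.le]
      congr 1
      rw [ht]
      field_simp
  set J : Set (EuclideanSpace ℝ (Fin N)) → ℝ≥0∞ :=
    fun F => fracPer N s F + rieszPot N g F with hJdef
  set I := ⨅ (F : Set (EuclideanSpace ℝ (Fin N))) (_ : F ∈ Adm), J F with hIdef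
  have hI_le : ∀ F ∈ Adm, I ≤ J F := fun F hF => iInf₂_le F hF
  obtain ⟨E1, hE1⟩ := hAdm_ex
  by_cases hItop : I = ⊤
  · refine ⟨E1, hE1.1, hE1.2.1, hE1.2.2, fun F hF1 hF2 hF3 => ?_⟩
    have hFT : J F = ⊤ := top_unique (hItop ▸ hI_le F ⟨hF1, hF2, hF3⟩)
    show J E1 ≤ J F
    rw [hFT]; exact le_top
  -- minimizing sequence
  have hseq : ∀ n : ℕ, ∃ F, F ∈ Adm ∧ J F < I + ((n:ℝ≥0∞)+1)⁻¹ := by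
    intro n
    have hlt : I < I + ((n:ℝ≥0∞)+1)⁻¹ := ENNReal.lt_add_right hItop (by simp)
    rw [hIdef] at hlt
    obtain ⟨F, hF⟩ := iInf_lt_iff.1 hlt
    obtain ⟨hFmem, hFlt⟩ := iInf_lt_iff.1 hF
    exact ⟨F, hFmem, hFlt⟩
  choose A hAmem hAJ using hseq
  have hAfp : ∀ n, fracPer N s (A n) ≤ I + 1 := by
    intro n
    calc fracPer N s (A n) ≤ J (A n) := le_add_right le_rfl
      _ ≤ I + ((n:ℝ≥0∞)+1)⁻¹ := (hAJ n).le
      _ ≤ I + 1 := add_le_add_right (ENNReal.inv_le_one.2 le_add_self) _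
  -- extraction of a subsequence along which all grid-box measures converge
  set ι : Type := Σ k : ℕ, (Fin N → Fin (k+1)) with hι
  set Φ : ℕ → ι → ℝ≥0∞ := fun n c => volume (A n ∩ gbox N R c.1 c.2) with hΦ
  obtain ⟨L, -, φ, hφmono, hconv'⟩ :=
    (isCompact_univ (X := ι → ℝ≥0∞)).isSeqCompact (x := Φ) (fun n => Set.mem_univ _)
  have hconv : ∀ c, Filter.Tendsto (fun n => Φ (φ n) c) Filter.atTop (𝓝 (L c)) :=
    fun c => (tendsto_pi_nhds.1 hconv') c
  have hcubefin : volume (cube N R) ≠ ⊤ := by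
    rw [volume_cube R hRpos.le]
    exact ENNReal.pow_ne_top ENNReal.ofReal_ne_top
  have hLfin : ∀ c : ι, L c ≠ ⊤ := by
    intro c
    have hle : ∀ n, Φ (φ n) c ≤ volume (cube N R) := fun n =>
      measure_mono (Set.inter_subset_left.trans (hAmem _).1)
    exact ((le_of_tendsto' (hconv c) hle).trans_lt (lt_top_iff_ne_top.2 hcubefin)).ne
  -- Cauchy property
  have hcauchy : ∀ ε : ℝ≥0∞, 0 < ε → ∃ K, ∀ n, K ≤ n → ∀ j, K ≤ j →
      volume (symmDiff (A (φ n)) (A (φ j))) ≤ ε := by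
    intro ε hε
    by_cases hεtop : ε = ⊤
    · exact ⟨0, fun n _ j _ => by rw [hεtop]; exact le_top⟩
    have hε2 : 0 < ε / 2 := ENNReal.div_pos hε.ne' ENNReal.ofNat_ne_top
    have hMne : ((I+1)+(I+1)) ≠ ⊤ := by
      have : I + 1 ≠ ⊤ := ENNReal.add_ne_top.2 ⟨hItop, ENNReal.one_ne_top⟩
      exact ENNReal.add_ne_top.2 ⟨this, this⟩
    -- choose the grid scale k
    have hTmul : Filter.Tendsto (fun k : ℕ =>
        (2 * ENNReal.ofReal ((Real.sqrt N * (R/(k+1))) ^ ((N : ℝ) + s)) /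
          (ENNReal.ofReal (R/(k+1)) ^ N)) * ((I+1)+(I+1))) Filter.atTop (𝓝 0) := by
      have := ENNReal.Tendsto.mul_const (grid_const_tendsto hN hs0 R hRpos) (Or.inr hMne)
      simpa using this
    obtain ⟨k, hk⟩ := (hTmul.eventually_lt_const hε2).exists
    set Ck := 2 * ENNReal.ofReal ((Real.sqrt N * (R/(k+1))) ^ ((N : ℝ) + s)) /
        (ENNReal.ofReal (R/(k+1)) ^ N) with hCk
    set cardE : ℝ≥0∞ := (Fintype.card (Fin N → Fin (k+1)) : ℝ≥0∞) with hcardE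
    set η := (ε / 2) / (4 * (cardE + 1)) with hη
    have hηpos : 0 < η := ENNReal.div_pos hε2.ne' (by finiteness)
    have hall : ∀ᶠ n in Filter.atTop, ∀ v : Fin N → Fin (k+1),
        Φ (φ n) ⟨k, v⟩ ∈ Icc (L ⟨k, v⟩ - η) (L ⟨k, v⟩ + η) :=
      Filter.eventually_all.2 fun v =>
        Filter.eventually_atTop.2 ((ENNReal.tendsto_atTop (hLfin ⟨k, v⟩)).1 (hconv ⟨k, v⟩) η hηpos)
    obtain ⟨K, hK⟩ := Filter.eventually_atTop.1 hall
    refine ⟨K, fun n hn j hj => ?_⟩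
    -- elementary: two points within η of the same limit differ by at most 2η
    have hdiff : ∀ (L' x y : ℝ≥0∞), x ∈ Icc (L' - η) (L' + η) → y ∈ Icc (L' - η) (L' + η) →
        x - y ≤ 2 * η := by
      intro L' x y hx hy
      calc x - y ≤ (L' + η) - (L' - η) := tsub_le_tsub hx.2 hy.1
        _ ≤ 2 * η := by
          rw [tsub_le_iff_right]
          rcases le_total η L' with h | h
          · have : η + (L' - η) = L' := add_tsub_cancel_of_le h
            rw [two_mul, add_assoc, this, add_comm]
          · calc L' + η ≤ η + η := add_le_add_left h _
              _ = 2 * η := (two_mul η).symm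
              _ ≤ 2 * η + (L' - η) := le_self_add
    have hsum_le : (∑ v : Fin N → Fin (k+1),
        ((volume (A (φ n) ∩ gbox N R k v) - volume (A (φ j) ∩ gbox N R k v)) +
         (volume (A (φ j) ∩ gbox N R k v) - volume (A (φ n) ∩ gbox N R k v)))) ≤ ε / 2 := by
      have hterm : ∀ v : Fin N → Fin (k+1),
          ((volume (A (φ n) ∩ gbox N R k v) - volume (A (φ j) ∩ gbox N R k v)) +
           (volume (A (φ j) ∩ gbox N R k v) - volume (A (φ n) ∩ gbox N R k v))) ≤
           2 * η + 2 * η := by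
        intro v
        have h1 := hK n hn v
        have h2 := hK j hj v
        exact add_le_add (hdiff _ _ _ h1 h2) (hdiff _ _ _ h2 h1)
      calc (∑ v : Fin N → Fin (k+1),
          ((volume (A (φ n) ∩ gbox N R k v) - volume (A (φ j) ∩ gbox N R k v)) +
           (volume (A (φ j) ∩ gbox N R k v) - volume (A (φ n) ∩ gbox N R k v)))) ≤
          Finset.univ.card • (2 * η + 2 * η) :=
            Finset.sum_le_card_nsmul _ _ _ (fun v _ => hterm v)
        _ = cardE * (4 * η) := by
            rw [nsmul_eq_mul, Finset.card_univ]
            rw [hcardE]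
            congr 1
            ring
        _ ≤ (4 * (cardE + 1)) * η := by
            rw [← mul_assoc, mul_comm cardE 4]
            exact mul_le_mul_left (mul_le_mul_right le_self_add _) _
        _ ≤ ε / 2 := ENNReal.mul_div_le
    have hen : volume (symmDiff (A (φ n)) (A (φ j))) ≤
        (∑ v : Fin N → Fin (k+1),
          ((volume (A (φ n) ∩ gbox N R k v) - volume (A (φ j) ∩ gbox N R k v)) +
           (volume (A (φ j) ∩ gbox N R k v) - volume (A (φ n) ∩ gbox N R k v)))) +
        Ck * (fracPer N s (A (φ n)) + fracPer N s (A (φ j))) :=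
      grid_est hN hs0 R hRpos k _ _ (hAmem _).2.1 (hAmem _).2.1 (hAmem _).1 (hAmem _).1
    calc volume (symmDiff (A (φ n)) (A (φ j))) ≤ _ := hen
      _ ≤ ε / 2 + ε / 2 := by
          refine add_le_add hsum_le ?_
          calc Ck * (fracPer N s (A (φ n)) + fracPer N s (A (φ j))) ≤
              Ck * ((I+1)+(I+1)) := mul_le_mul_right (add_le_add (hAfp _) (hAfp _)) _
            _ ≤ ε / 2 := hk.le
      _ = ε := ENNReal.add_halves ε
  -- rapid subsequence
  have hgeom_pos : ∀ i : ℕ, (0:ℝ≥0∞) < 2⁻¹ ^ i := fun i =>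
    ENNReal.pow_pos (ENNReal.inv_pos.2 ENNReal.ofNat_ne_top) i
  have hcau' : ∀ i : ℕ, ∃ K, ∀ n, K ≤ n → ∀ j, K ≤ j →
      volume (symmDiff (A (φ n)) (A (φ j))) ≤ 2⁻¹ ^ i := fun i => hcauchy _ (hgeom_pos i)
  choose K hK using hcau'
  set ψ : ℕ → ℕ := fun i => Nat.rec (K 0) (fun i ih => max (ih + 1) (K (i+1))) i with hψ
  have hψsucc : ∀ i, ψ (i+1) = max (ψ i + 1) (K (i+1)) := fun i => rfl
  have hψmono : StrictMono ψ := strictMono_nat_of_lt_succ fun i => by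
    rw [hψsucc]
    exact lt_of_lt_of_le (Nat.lt_succ_self _) (le_max_left _ _)
  have hψK : ∀ i, K i ≤ ψ i := by
    intro i
    cases i with
    | zero => exact le_rfl
    | succ i => rw [hψsucc]; exact le_max_right _ _
  set F : ℕ → Set (EuclideanSpace ℝ (Fin N)) := fun i => A (φ (ψ i)) with hF
  have hFmem : ∀ i, F i ∈ Adm := fun i => hAmem _
  have hFmeas : ∀ i, MeasurableSet (F i) := fun i => (hFmem i).2.1
  have hFcube : ∀ i, F i ⊆ cube N R := fun i => (hFmem i).1
  have hFvol : ∀ i, volume (F i) = ENNReal.ofReal m := fun i => (hFmem i).2.2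
  have hFdiff : ∀ i, volume (symmDiff (F i) (F (i+1))) ≤ 2⁻¹ ^ i := by
    intro i
    exact hK i _ (hψK i) _ ((hψK i).trans ((hψmono.monotone (Nat.le_succ i))))
  have hsum : ∑' i, volume (symmDiff (F i) (F (i+1))) ≠ ⊤ := by
    have hle : ∑' i, volume (symmDiff (F i) (F (i+1))) ≤ ∑' i : ℕ, (2⁻¹:ℝ≥0∞) ^ i :=
      ENNReal.tsum_le_tsum hFdiff
    have hgeo : ∑' i : ℕ, (2⁻¹:ℝ≥0∞) ^ i = 2 := by
      rw [ENNReal.tsum_geometric]; norm_num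
    rw [hgeo] at hle
    exact (hle.trans_lt (by norm_num)).ne
  set E₀ : Set (EuclideanSpace ℝ (Fin N)) := ⋃ n, ⋂ i, ⋂ (_ : n ≤ i), F i with hE₀def
  have hE₀meas : MeasurableSet E₀ :=
    MeasurableSet.iUnion fun n => MeasurableSet.iInter fun i =>
      MeasurableSet.iInter fun _ => hFmeas i
  have hE₀cube : E₀ ⊆ cube N R :=
    Set.iUnion_subset fun n => (Set.iInter₂_subset n le_rfl).trans (hFcube n)
  have hae : ∀ᵐ x ∂(volume : Measure (EuclideanSpace ℝ (Fin N))),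
      ∀ᶠ i in Filter.atTop, (x ∈ F i ↔ x ∈ E₀) := liminf_set_ae F hsum
  -- volume of the limit set
  have hE₀vol : volume E₀ = ENNReal.ofReal m := by
    have htend : Filter.Tendsto (fun i => volume (F i)) Filter.atTop (𝓝 (volume E₀)) := by
      have hrw : ∀ i, volume (F i) =
          ∫⁻ x, (F i).indicator (fun _ => (1:ℝ≥0∞)) x := fun i =>
        (lintegral_indicator_one (hFmeas i)).symm
      rw [show volume E₀ = ∫⁻ x, E₀.indicator (fun _ => (1:ℝ≥0∞)) x from
        (lintegral_indicator_one hE₀meas).symm]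
      simp only [hrw]
      refine tendsto_lintegral_of_dominated_convergence
        ((cube N R).indicator (fun _ => (1:ℝ≥0∞)))
        (fun i => measurable_const.indicator (hFmeas i)) (fun i => ?_) ?_ ?_
      · exact Filter.Eventually.of_forall fun x =>
          Set.indicator_le_indicator_of_subset (hFcube i) (fun _ => zero_le) x
      · have hcb : ∫⁻ a, (cube N R).indicator (fun _ => (1:ℝ≥0∞)) a = volume (cube N R) := by
          rw [lintegral_indicator (measurableSet_cube R)]
          simp
        rw [hcb]; exact hcubefin
      · filter_upwards [hae] with x hx
        refine tendsto_const_nhds.congr' ?_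
        filter_upwards [hx] with i hi
        simp [Set.indicator_apply, hi]
    have hconst : Filter.Tendsto (fun i => volume (F i)) Filter.atTop (𝓝 (ENNReal.ofReal m)) := by
      simp only [hFvol]
      exact tendsto_const_nhds
    exact tendsto_nhds_unique htend hconst
  -- lower semicontinuity via Fatou on the product space
  set μ2 : Measure (EuclideanSpace ℝ (Fin N) × EuclideanSpace ℝ (Fin N)) :=
    ((volume : Measure (EuclideanSpace ℝ (Fin N))).prod volume) with hμ2
  set k₁ : EuclideanSpace ℝ (Fin N) × EuclideanSpace ℝ (Fin N) → ℝ≥0∞ :=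
    fun p => fracKer N s (p.1 - p.2) with hk₁def
  set k₂ : EuclideanSpace ℝ (Fin N) × EuclideanSpace ℝ (Fin N) → ℝ≥0∞ :=
    fun p => ENNReal.ofReal (g (p.1 - p.2)) with hk₂def
  have hk₁ : Measurable k₁ := measurable_fracKerP N s
  have hk₂ : AEMeasurable k₂ μ2 := aemeasurable_gker g hg_aem
  set H : Set (EuclideanSpace ℝ (Fin N)) →
      EuclideanSpace ℝ (Fin N) × EuclideanSpace ℝ (Fin N) → ℝ≥0∞ :=
    fun S p => (S ×ˢ Sᶜ).indicator k₁ p + (S ×ˢ S).indicator k₂ p with hHdef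
  have hHaem : ∀ S : Set (EuclideanSpace ℝ (Fin N)), MeasurableSet S →
      AEMeasurable (H S) μ2 := fun S hS =>
    ((hk₁.indicator (hS.prod hS.compl)).aemeasurable).add (hk₂.indicator (hS.prod hS))
  have hHrw : ∀ S : Set (EuclideanSpace ℝ (Fin N)), MeasurableSet S →
      J S = ∫⁻ p, H S p ∂μ2 := by
    intro S hS
    rw [hHdef]
    rw [lintegral_add_left' ((hk₁.indicator (hS.prod hS.compl)).aemeasurable)]
    rw [hJdef]
    dsimp only
    rw [fracPer_eq_prod S hS, rieszPot_eq_prod g hg_aem S hS]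
  have haeH : ∀ᵐ p ∂μ2, ∀ᶠ i in Filter.atTop, H (F i) p = H E₀ p := by
    filter_upwards [ae_prod_of_ae _ hae] with p hp
    obtain ⟨hp1, hp2⟩ := hp
    filter_upwards [hp1, hp2] with i h1 h2
    rw [hHdef]
    dsimp only
    simp only [Set.indicator_apply, Set.mem_prod, Set.mem_compl_iff, h1, h2]
  have hJE₀ : J E₀ ≤ Filter.liminf (fun i => J (F i)) Filter.atTop := by
    rw [hHrw E₀ hE₀meas]
    calc (∫⁻ p, H E₀ p ∂μ2) ≤ ∫⁻ p, Filter.liminf (fun i => H (F i) p) Filter.atTop ∂μ2 := by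
          refine lintegral_mono_ae ?_
          filter_upwards [haeH] with p hp
          have : Filter.liminf (fun i => H (F i) p) Filter.atTop = H E₀ p := by
            rw [Filter.liminf_congr hp, Filter.liminf_const]
          rw [this]
      _ ≤ Filter.liminf (fun i => ∫⁻ p, H (F i) p ∂μ2) Filter.atTop :=
          lintegral_liminf_le' fun i => hHaem (F i) (hFmeas i)
      _ = Filter.liminf (fun i => J (F i)) Filter.atTop :=
          Filter.liminf_congr (Filter.Eventually.of_forall fun i => (hHrw (F i) (hFmeas i)).symm)
  have hJlim : Filter.liminf (fun i => J (F i)) Filter.atTop ≤ I := by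
    have hσ : ∀ i : ℕ, (i : ℕ) ≤ φ (ψ i) := fun i => (hφmono.comp hψmono).le_apply
    have hle : ∀ i : ℕ, J (F i) ≤ I + ((i:ℝ≥0∞)+1)⁻¹ := by
      intro i
      refine (hAJ (φ (ψ i))).le.trans (add_le_add_right ?_ _)
      refine ENNReal.inv_le_inv.2 (add_le_add_left ?_ _)
      exact_mod_cast hσ i
    have hinv : Filter.Tendsto (fun i : ℕ => ((i:ℝ≥0∞)+1)⁻¹) Filter.atTop (𝓝 0) := by
      have h := ENNReal.tendsto_inv_nat_nhds_zero.comp (Filter.tendsto_add_atTop_nat 1)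
      convert h using 2 with i
      simp [Function.comp]
    have htend : Filter.Tendsto (fun i : ℕ => I + ((i:ℝ≥0∞)+1)⁻¹) Filter.atTop (𝓝 I) := by
      simpa using tendsto_const_nhds.add hinv
    calc Filter.liminf (fun i => J (F i)) Filter.atTop ≤
        Filter.liminf (fun i : ℕ => I + ((i:ℝ≥0∞)+1)⁻¹) Filter.atTop :=
          Filter.liminf_le_liminf (Filter.Eventually.of_forall hle)
      _ = I := htend.liminf_eq
  refine ⟨E₀, hE₀cube, hE₀meas, hE₀vol, fun F' hF1 hF2 hF3 => ?_⟩
  show J E₀ ≤ J F'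
  calc J E₀ ≤ Filter.liminf (fun i => J (F i)) Filter.atTop := hJE₀
    _ ≤ I := hJlim
    _ ≤ J F' := hI_le F' ⟨hF1, hF2, hF3⟩
end

section
/- Let s ∈ (0,1), m > 0, and g: ℝ^N\{0} → ℝ be nonnegative, radially non-increasing, symmetric, and integrable on ℝ^N. If E is a minimizer of ℰ_{s,g} = P_s + V_g among sets of volume m, then E satisfies the almost-minimality (Λ-minimality) property: P_s(E) ≤ P_s(F) + (2‖g‖_{L^1(ℝ^N)} + μ₀)|E Δ F| for every bounded measurable F ⊆ ℝ^N, where μ₀ is the penalization constant from the reduction to the unconstrained problem. -/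
open MeasureTheory ENNReal Set

/-- The penalization term `μ · ||F| − m|`, as an element of `[0,∞]`. -/
noncomputable def penalty (N : ℕ) (μ m : ℝ) (F : Set (EuclideanSpace ℝ (Fin N))) : ℝ≥0∞ :=
  ENNReal.ofReal μ * ((volume F - ENNReal.ofReal m) + (ENNReal.ofReal m - volume F))

namespace AM

abbrev Eu (N : ℕ) := EuclideanSpace ℝ (Fin N)

variable {N : ℕ}

lemma eu_nontrivial (hN : 0 < N) : Nontrivial (Eu N) :=
  ⟨0, EuclideanSpace.single ⟨0, hN⟩ 1, by
    intro h; have := congrArg (· ⟨0, hN⟩) h; simp [EuclideanSpace.single] at this⟩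

lemma map_smul_vol {c : ℝ} (hc : c ≠ 0) :
    Measure.map (c • ·) (volume : Measure (Eu N)) = ENNReal.ofReal |(c ^ N)⁻¹| • volume := by
  rw [Measure.map_addHaar_smul volume hc, finrank_euclideanSpace_fin]

lemma setLint_smul {c : ℝ} (hc : c ≠ 0) {f : Eu N → ℝ≥0∞} (hf : Measurable f)
    {A : Set (Eu N)} (hA : MeasurableSet A) :
    ∫⁻ x in (c • ·) ⁻¹' A, f (c • x) = ENNReal.ofReal |(c ^ N)⁻¹| * ∫⁻ y in A, f y := by
  rw [← setLIntegral_map hA hf (measurable_const_smul c), map_smul_vol hc,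
    Measure.restrict_smul, lintegral_smul_measure, smul_eq_mul]

lemma lint_smul {c : ℝ} (hc : c ≠ 0) {f : Eu N → ℝ≥0∞} (hf : Measurable f) :
    ∫⁻ x, f (c • x) = ENNReal.ofReal |(c ^ N)⁻¹| * ∫⁻ y, f y := by
  rw [← lintegral_map hf (measurable_const_smul c), map_smul_vol hc, lintegral_smul_measure, smul_eq_mul]

lemma meas_fracKer {s : ℝ} : Measurable (fracKer N s) := by
  unfold fracKer; fun_prop

lemma meas_ker2 {k : Eu N → ℝ≥0∞} (hk : Measurable k) :
    Measurable (fun p : Eu N × Eu N => k (p.1 - p.2)) :=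
  hk.comp (measurable_fst.sub measurable_snd)

lemma meas_inner {k : Eu N → ℝ≥0∞} (hk : Measurable k) (B : Set (Eu N)) :
    Measurable (fun x : Eu N => ∫⁻ y in B, k (x - y)) :=
  Measurable.lintegral_prod_right (meas_ker2 hk)

lemma lint_sub_left {k : Eu N → ℝ≥0∞} (hk : Measurable k) (x : Eu N) :
    ∫⁻ y, k (x - y) = ∫⁻ z, k z :=
  (Measure.measurePreserving_sub_left volume x).lintegral_comp hk

lemma lint_sub_right {k : Eu N → ℝ≥0∞} (hk : Measurable k) (y : Eu N) :
    ∫⁻ x, k (x - y) = ∫⁻ z, k z := by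
  simp_rw [sub_eq_add_neg]
  exact (measurePreserving_add_right volume (-y)).lintegral_comp hk

/-- The double integral `∫_A ∫_B k(x-y)`. -/
noncomputable def dint (k : Eu N → ℝ≥0∞) (A B : Set (Eu N)) : ℝ≥0∞ :=
  ∫⁻ x in A, ∫⁻ y in B, k (x - y)

lemma dint_def (k : Eu N → ℝ≥0∞) (A B : Set (Eu N)) :
    dint k A B = ∫⁻ x in A, ∫⁻ y in B, k (x - y) := rfl

lemma dint_mono {k : Eu N → ℝ≥0∞} {A A' B B' : Set (Eu N)} (hA : A ⊆ A') (hB : B ⊆ B') :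
    dint k A B ≤ dint k A' B' :=
  lintegral_mono' (Measure.restrict_mono hA le_rfl)
    (fun _ => lintegral_mono' (Measure.restrict_mono hB le_rfl) le_rfl)

lemma dint_le_dint {u v : Eu N → ℝ≥0∞} (h : ∀ z, u z ≤ v z) (A B : Set (Eu N)) :
    dint u A B ≤ dint v A B :=
  lintegral_mono fun _ => lintegral_mono fun _ => h _

lemma dint_le_vol_left {k : Eu N → ℝ≥0∞} (hk : Measurable k) (A B : Set (Eu N)) :
    dint k A B ≤ (∫⁻ z, k z) * volume A := by
  calc dint k A B ≤ ∫⁻ _x in A, ∫⁻ z, k z := by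
        refine lintegral_mono fun x => ?_
        rw [← lint_sub_left hk x]
        exact lintegral_mono' Measure.restrict_le_self le_rfl
    _ = (∫⁻ z, k z) * volume A := by rw [setLIntegral_const]

lemma dint_swap {k : Eu N → ℝ≥0∞} (hk : Measurable k) (A B : Set (Eu N)) :
    dint k A B = ∫⁻ y in B, ∫⁻ x in A, k (x - y) :=
  lintegral_lintegral_swap (meas_ker2 hk).aemeasurable

lemma dint_le_vol_right {k : Eu N → ℝ≥0∞} (hk : Measurable k) (A B : Set (Eu N)) :
    dint k A B ≤ (∫⁻ z, k z) * volume B := by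
  rw [dint_swap hk]
  calc (∫⁻ y in B, ∫⁻ x in A, k (x - y)) ≤ ∫⁻ _y in B, ∫⁻ z, k z := by
        refine lintegral_mono fun y => ?_
        rw [← lint_sub_right hk y]
        exact lintegral_mono' Measure.restrict_le_self le_rfl
    _ = (∫⁻ z, k z) * volume B := by rw [setLIntegral_const]

lemma dint_union_left {k : Eu N → ℝ≥0∞} (A₁ A₂ B : Set (Eu N)) :
    dint k (A₁ ∪ A₂) B ≤ dint k A₁ B + dint k A₂ B := by
  unfold dint
  refine (lintegral_mono' (Measure.restrict_union_le _ _) le_rfl).trans_eq ?_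
  exact lintegral_add_measure _ _ _

lemma dint_union_right {k : Eu N → ℝ≥0∞} (hk : Measurable k) (A B₁ B₂ : Set (Eu N)) :
    dint k A (B₁ ∪ B₂) ≤ dint k A B₁ + dint k A B₂ := by
  rw [dint_def, dint_def, dint_def]
  calc ∫⁻ x in A, ∫⁻ y in B₁ ∪ B₂, k (x - y)
      ≤ ∫⁻ x in A, ((∫⁻ y in B₁, k (x - y)) + ∫⁻ y in B₂, k (x - y)) := by
        refine lintegral_mono fun x => ?_
        refine (lintegral_mono' (Measure.restrict_union_le _ _) le_rfl).trans_eq ?_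
        exact lintegral_add_measure _ _ _
    _ = _ := lintegral_add_left (meas_inner hk B₁) _

lemma dint_add {u v : Eu N → ℝ≥0∞} (hu : Measurable u) (hv : Measurable v)
    (A B : Set (Eu N)) :
    dint (fun z => u z + v z) A B = dint u A B + dint v A B := by
  rw [dint_def, dint_def, dint_def]
  have h1 : ∀ x : Eu N, (∫⁻ y in B, (u (x - y) + v (x - y)))
      = (∫⁻ y in B, u (x - y)) + ∫⁻ y in B, v (x - y) := fun x =>
    lintegral_add_left (hu.comp (measurable_const.sub measurable_id)) _
  simp_rw [h1]
  exact lintegral_add_left (meas_inner hu B) _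

lemma dint_smul {c : ℝ} (hc : c ≠ 0) {k : Eu N → ℝ≥0∞} (hk : Measurable k)
    {A B : Set (Eu N)} (hA : MeasurableSet A) (hB : MeasurableSet B) :
    dint k ((c • ·) ⁻¹' A) ((c • ·) ⁻¹' B)
      = (ENNReal.ofReal |(c ^ N)⁻¹|) ^ 2 * dint (fun z => k (c⁻¹ • z)) A B := by
  unfold dint
  have hmeas1 : ∀ x : Eu N, Measurable (fun v => k (x - c⁻¹ • v)) := fun x =>
    hk.comp (measurable_const.sub (measurable_const_smul _))
  have h1 : ∀ x : Eu N, (∫⁻ y in (c • ·) ⁻¹' B, k (x - y))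
      = ENNReal.ofReal |(c ^ N)⁻¹| * ∫⁻ v in B, k (x - c⁻¹ • v) := by
    intro x
    have := setLint_smul hc (hmeas1 x) hB
    simpa [inv_smul_smul₀ hc] using this
  simp_rw [h1]
  rw [lintegral_const_mul' _ _ ofReal_ne_top]
  have hmeas2 : Measurable (fun u : Eu N => ∫⁻ v in B, k (c⁻¹ • u - c⁻¹ • v)) := by
    refine Measurable.lintegral_prod_right ?_
    exact hk.comp (by fun_prop)
  have h2 := setLint_smul hc hmeas2 hA
  have h3 : ∀ x : Eu N, (∫⁻ v in B, k (c⁻¹ • (c • x) - c⁻¹ • v))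
      = ∫⁻ v in B, k (x - c⁻¹ • v) := by
    intro x; simp [inv_smul_smul₀ hc]
  simp_rw [h3] at h2
  rw [h2, ← mul_assoc, sq]
  congr 1
  refine lintegral_congr fun u => lintegral_congr fun v => ?_
  rw [smul_sub]

lemma dint_const_mul {k : Eu N → ℝ≥0∞} (a : ℝ≥0∞) (ha : a ≠ ⊤) (A B : Set (Eu N)) :
    dint (fun z => a * k z) A B = a * dint k A B := by
  rw [dint_def, dint_def]
  simp_rw [lintegral_const_mul' a _ ha]

lemma dint_congr {k k' : Eu N → ℝ≥0∞} (h : ∀ z, k z = k' z) (A B : Set (Eu N)) :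
    dint k A B = dint k' A B := by
  rw [dint_def, dint_def]; exact lintegral_congr fun x => lintegral_congr fun y => by rw [h]

lemma fracKer_smul {s : ℝ} (hNs : 0 < (N : ℝ) + s) {c : ℝ} (hc : 0 < c) (z : Eu N) :
    fracKer N s (c • z) = ENNReal.ofReal (c ^ (-((N : ℝ) + s))) * fracKer N s z := by
  unfold fracKer
  rw [← ENNReal.ofReal_mul (Real.rpow_nonneg hc.le _)]
  congr 1
  rw [norm_smul, Real.norm_eq_abs, abs_of_pos hc, Real.mul_rpow hc.le (norm_nonneg z)]

lemma fracPer_eq_dint {s : ℝ} (E : Set (Eu N)) : fracPer N s E = dint (fracKer N s) E Eᶜ := by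
  rw [dint_def]; rfl

lemma abs_inv_pow_eq {c : ℝ} (hc : 0 < c) : |((c ^ N)⁻¹ : ℝ)| = c ^ (-(N : ℝ)) := by
  rw [abs_inv, abs_pow, abs_of_pos hc, ← Real.rpow_natCast c N, ← Real.rpow_neg hc.le]

lemma fracPer_smul {s : ℝ} (hs : 0 < s) {c : ℝ} (hc : 0 < c) {F : Set (Eu N)}
    (hF : MeasurableSet F) :
    fracPer N s ((c • ·) ⁻¹' F) = ENNReal.ofReal (c ^ (s - (N : ℝ))) * fracPer N s F := by
  have hNs : 0 < (N : ℝ) + s := by positivity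
  have hcompl : ((c • ·) ⁻¹' F)ᶜ = (c • ·) ⁻¹' Fᶜ := rfl
  rw [fracPer_eq_dint, hcompl, dint_smul hc.ne' meas_fracKer hF hF.compl]
  have hker : ∀ z : Eu N, fracKer N s (c⁻¹ • z)
      = ENNReal.ofReal ((c⁻¹) ^ (-((N : ℝ) + s))) * fracKer N s z :=
    fracKer_smul hNs (inv_pos.mpr hc)
  rw [dint_congr hker, dint_const_mul _ ofReal_ne_top, fracPer_eq_dint, ← mul_assoc]
  congr 1
  rw [abs_inv_pow_eq hc, ← ENNReal.ofReal_pow (Real.rpow_nonneg hc.le _), ← ENNReal.ofReal_mul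
    (by positivity)]
  congr 1
  rw [← Real.rpow_natCast (c ^ (-(N:ℝ))) 2, ← Real.rpow_mul hc.le,
    Real.inv_rpow hc.le, ← Real.rpow_neg hc.le, ← Real.rpow_add hc]
  norm_num
  ring_nf

lemma exists_dyadic {δ t : ℝ} (hδ : 0 < δ) (ht : δ ≤ t) :
    ∃ j : ℕ, (2:ℝ) ^ ((j:ℝ)) * δ ≤ t ∧ t < 2 ^ ((j:ℝ) + 1) * δ := by
  have hP : ∃ j : ℕ, t < 2 ^ ((j:ℝ) + 1) * δ := by
    obtain ⟨n, hn⟩ := pow_unbounded_of_one_lt (t / δ) (one_lt_two (α := ℝ))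
    refine ⟨n, ?_⟩
    have h1 : t < 2 ^ (n:ℝ) * δ := by
      rw [Real.rpow_natCast]
      calc t = t / δ * δ := by field_simp
        _ < 2 ^ n * δ := by exact mul_lt_mul_of_pos_right hn hδ
    refine h1.trans_le (mul_le_mul_of_nonneg_right ?_ hδ.le)
    exact Real.rpow_le_rpow_of_exponent_le one_le_two (by linarith)
  refine ⟨Nat.find hP, ?_, Nat.find_spec hP⟩
  rcases Nat.eq_zero_or_eq_succ_pred (Nat.find hP) with h0 | hsucc
  · rw [h0]; simpa using ht
  · set j := Nat.find hP with hj
    have hjpos : 0 < j := by omega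
    have := Nat.find_min hP (m := j - 1) (by omega)
    push_neg at this
    have hcast : ((j - 1 : ℕ) : ℝ) + 1 = (j : ℝ) := by
      have : (j - 1 : ℕ) + 1 = j := by omega
      exact_mod_cast congrArg (fun n : ℕ => (n : ℝ)) this
    rwa [hcast] at this

lemma key1 {s δ : ℝ} (hδ : 0 < δ) (j : ℕ) :
    ((2:ℝ) ^ ((j:ℝ)) * δ) ^ (-((N:ℝ) + s)) * ((2:ℝ) ^ ((j:ℝ) + 1) * δ) ^ (N:ℕ)
      = ((2:ℝ) ^ ((N:ℝ)) * δ ^ (-s)) * ((2:ℝ) ^ (-s)) ^ (j:ℕ) := by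
  have h2 : (0:ℝ) < 2 := two_pos
  have hb : (0:ℝ) < 2 ^ ((j:ℝ)) := Real.rpow_pos_of_pos h2 _
  have hb2 : (0:ℝ) < 2 ^ ((j:ℝ) + 1) := Real.rpow_pos_of_pos h2 _
  calc ((2:ℝ) ^ ((j:ℝ)) * δ) ^ (-((N:ℝ) + s)) * ((2:ℝ) ^ ((j:ℝ) + 1) * δ) ^ (N:ℕ)
      = ((2:ℝ) ^ ((j:ℝ) * (-((N:ℝ) + s))) * δ ^ (-((N:ℝ) + s)))
        * ((2:ℝ) ^ (((j:ℝ) + 1) * (N:ℝ)) * δ ^ ((N:ℝ))) := by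
        rw [← Real.rpow_natCast ((2:ℝ) ^ ((j:ℝ) + 1) * δ) N, Real.mul_rpow hb.le hδ.le,
          Real.mul_rpow hb2.le hδ.le, ← Real.rpow_mul h2.le, ← Real.rpow_mul h2.le]
    _ = (2:ℝ) ^ ((j:ℝ) * (-((N:ℝ) + s)) + ((j:ℝ) + 1) * (N:ℝ))
        * δ ^ (-((N:ℝ) + s) + (N:ℝ)) := by
        rw [Real.rpow_add h2, Real.rpow_add hδ]; ring
    _ = (2:ℝ) ^ ((N:ℝ) + (-s) * (j:ℝ)) * δ ^ (-s) := by
        congr 2 <;> ring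
    _ = ((2:ℝ) ^ ((N:ℝ)) * δ ^ (-s)) * ((2:ℝ) ^ (-s)) ^ (j:ℕ) := by
        rw [Real.rpow_add h2, ← Real.rpow_natCast ((2:ℝ) ^ (-s)) j, ← Real.rpow_mul h2.le]
        ring_nf

/-- Tail constant for the fractional kernel. -/
noncomputable def tailC (N : ℕ) (s : ℝ) : ℝ≥0∞ :=
  volume (Metric.ball (0 : Eu N) 1) * ENNReal.ofReal ((2:ℝ) ^ ((N:ℝ)))
    * (1 - ENNReal.ofReal ((2:ℝ) ^ (-s)))⁻¹

lemma tailC_lt_top {s : ℝ} (hs : 0 < s) : tailC N s < ⊤ := by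
  have h1 : ENNReal.ofReal ((2:ℝ) ^ (-s)) < 1 := by
    rw [← ENNReal.ofReal_one]
    exact ENNReal.ofReal_lt_ofReal_iff_of_nonneg (by positivity) |>.mpr
      (Real.rpow_lt_one_of_one_lt_of_neg one_lt_two (by linarith))
  have h2 : (1 - ENNReal.ofReal ((2:ℝ) ^ (-s))) ≠ 0 := by
    simp only [ne_eq, tsub_eq_zero_iff_le, not_le]; exact h1
  exact ENNReal.mul_lt_top (ENNReal.mul_lt_top measure_ball_lt_top ofReal_lt_top)
    (ENNReal.inv_lt_top.mpr (pos_iff_ne_zero.mpr h2))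

lemma tail_bound (hN : 0 < N) {s : ℝ} (hs : 0 < s) (x : Eu N) {δ : ℝ} (hδ : 0 < δ) :
    ∫⁻ y in (Metric.ball x δ)ᶜ, fracKer N s (x - y) ≤ tailC N s * ENNReal.ofReal (δ ^ (-s)) := by
  have := eu_nontrivial hN
  set Sh : ℕ → Set (Eu N) :=
    fun j => Metric.ball x (2 ^ ((j:ℝ) + 1) * δ) \ Metric.ball x (2 ^ ((j:ℝ)) * δ) with hSh
  have hcover : (Metric.ball x δ)ᶜ ⊆ ⋃ j, Sh j := by
    intro y hy
    have hd : δ ≤ dist y x := by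
      simpa [Metric.mem_ball, not_lt] using hy
    obtain ⟨j, hj1, hj2⟩ := exists_dyadic hδ hd
    refine mem_iUnion.mpr ⟨j, ⟨?_, ?_⟩⟩
    · exact Metric.mem_ball.mpr hj2
    · simp only [Metric.mem_ball, not_lt]; exact hj1
  calc ∫⁻ y in (Metric.ball x δ)ᶜ, fracKer N s (x - y)
      ≤ ∫⁻ y in ⋃ j, Sh j, fracKer N s (x - y) :=
        lintegral_mono' (Measure.restrict_mono hcover le_rfl) le_rfl
    _ ≤ ∑' j : ℕ, ∫⁻ y in Sh j, fracKer N s (x - y) := lintegral_iUnion_le _ _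
    _ ≤ ∑' j : ℕ, ENNReal.ofReal (((2:ℝ) ^ ((j:ℝ)) * δ) ^ (-((N:ℝ) + s))) * volume (Sh j) := by
        refine ENNReal.tsum_le_tsum fun j => ?_
        refine (setLIntegral_mono measurable_const fun y hy => ?_).trans_eq
          (setLIntegral_const _ _)
        have hyx : 2 ^ ((j:ℝ)) * δ ≤ ‖x - y‖ := by
          have : ¬ dist y x < 2 ^ ((j:ℝ)) * δ := by
            have := hy.2; simpa [Metric.mem_ball] using this
          rw [show ‖x - y‖ = dist y x by rw [dist_eq_norm, ← neg_sub x y, norm_neg]]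
          linarith [not_lt.mp this]
        unfold fracKer
        exact ENNReal.ofReal_le_ofReal
          (Real.rpow_le_rpow_of_nonpos (by positivity) hyx
            (by have := Nat.cast_nonneg (α := ℝ) N; linarith))
    _ ≤ ∑' j : ℕ, ENNReal.ofReal (((2:ℝ) ^ ((j:ℝ)) * δ) ^ (-((N:ℝ) + s)))
          * (ENNReal.ofReal (((2:ℝ) ^ ((j:ℝ) + 1) * δ) ^ (N:ℕ))
             * volume (Metric.ball (0 : Eu N) 1)) := by
        refine ENNReal.tsum_le_tsum fun j => ?_
        refine mul_le_mul_right ?_ _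
        have hsub : Sh j ⊆ Metric.ball x (2 ^ ((j:ℝ) + 1) * δ) := diff_subset
        refine (measure_mono hsub).trans_eq ?_
        rw [Measure.addHaar_ball volume x (by positivity), finrank_euclideanSpace_fin]
    _ = ∑' j : ℕ, (volume (Metric.ball (0 : Eu N) 1) * ENNReal.ofReal ((2:ℝ) ^ ((N:ℝ)))
          * ENNReal.ofReal (δ ^ (-s))) * ENNReal.ofReal ((2:ℝ) ^ (-s)) ^ (j:ℕ) := by
        refine tsum_congr fun j => ?_
        rw [← mul_assoc, ← ENNReal.ofReal_mul (by positivity), key1 hδ j,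
          ← ENNReal.ofReal_pow (by positivity), ENNReal.ofReal_mul (by positivity),
          ENNReal.ofReal_mul (by positivity)]
        ring
    _ = (volume (Metric.ball (0 : Eu N) 1) * ENNReal.ofReal ((2:ℝ) ^ ((N:ℝ)))
          * ENNReal.ofReal (δ ^ (-s))) * (1 - ENNReal.ofReal ((2:ℝ) ^ (-s)))⁻¹ := by
        rw [ENNReal.tsum_mul_left, ENNReal.tsum_geometric]
    _ = tailC N s * ENNReal.ofReal (δ ^ (-s)) := by unfold tailC; ring

lemma two_rpow_le_one {a : ℝ} (ha : a ≤ 0) : (2:ℝ) ^ a ≤ 1 :=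
  Real.rpow_le_one_of_one_le_of_nonpos one_le_two ha

lemma ball_cover {r : ℝ} (hr : 0 < r) :
    Metric.ball (0 : Eu N) r ⊆
      ⋃ k : ℕ, (Metric.ball (0 : Eu N) (r * (1 - 2 ^ (-((k:ℝ) + 1))))
        \ Metric.ball (0 : Eu N) (r * (1 - 2 ^ (-(k:ℝ))))) := by
  intro y hy
  have hy' : ‖y‖ < r := mem_ball_zero_iff.mp hy
  have hP : ∃ k : ℕ, ‖y‖ < r * (1 - 2 ^ (-((k:ℝ) + 1))) := by
    have hε : 0 < (r - ‖y‖) / r := div_pos (by linarith) hr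
    obtain ⟨n, hn⟩ := exists_pow_lt_of_lt_one hε (by norm_num : (2:ℝ)⁻¹ < 1)
    refine ⟨n, ?_⟩
    have h1 : (2:ℝ) ^ (-((n:ℝ) + 1)) ≤ (2:ℝ)⁻¹ ^ n := by
      rw [inv_pow, ← Real.rpow_natCast (2:ℝ) n, ← Real.rpow_neg (by norm_num)]
      exact Real.rpow_le_rpow_of_exponent_le one_le_two (by linarith)
    have h2 : (2:ℝ) ^ (-((n:ℝ) + 1)) < (r - ‖y‖) / r := lt_of_le_of_lt h1 hn
    have := mul_lt_mul_of_pos_left h2 hr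
    rw [mul_div_cancel₀ _ hr.ne'] at this
    nlinarith
  refine mem_iUnion.mpr ⟨Nat.find hP, ⟨mem_ball_zero_iff.mpr (Nat.find_spec hP), ?_⟩⟩
  rcases Nat.eq_zero_or_eq_succ_pred (Nat.find hP) with h0 | hsucc
  · rw [h0]
    simp only [Metric.mem_ball, not_lt, Nat.cast_zero, neg_zero, Real.rpow_zero]
    simp [dist_zero_right]
  · set k := Nat.find hP with hk
    have hkpos : 0 < k := by omega
    have hmin := Nat.find_min hP (m := k - 1) (by omega)
    push_neg at hmin
    have hcast : ((k - 1 : ℕ) : ℝ) + 1 = (k : ℝ) := by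
      have : (k - 1 : ℕ) + 1 = k := by omega
      exact_mod_cast congrArg (fun n : ℕ => (n : ℝ)) this
    rw [hcast] at hmin
    simp only [Metric.mem_ball, not_lt, dist_zero_right]
    exact hmin

lemma annulus_vol (hN : 0 < N) {r : ℝ} (hr : 0 < r) (k : ℕ) :
    volume (Metric.ball (0 : Eu N) (r * (1 - 2 ^ (-((k:ℝ) + 1))))
        \ Metric.ball (0 : Eu N) (r * (1 - 2 ^ (-(k:ℝ)))))
      ≤ ENNReal.ofReal (r ^ (N:ℕ) * ((N:ℝ) * 2 ^ (-(k:ℝ))))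
          * volume (Metric.ball (0 : Eu N) 1) := by
  have := eu_nontrivial hN
  set t : ℝ := 2 ^ (-(k:ℝ)) with hT
  have ht0 : 0 < t := Real.rpow_pos_of_pos two_pos _
  have ht1 : t ≤ 1 := two_rpow_le_one (neg_nonpos.mpr (Nat.cast_nonneg k))
  have hsub1 : Metric.ball (0 : Eu N) (r * (1 - 2 ^ (-((k:ℝ) + 1)))) ⊆ Metric.ball 0 r :=
    Metric.ball_subset_ball (by nlinarith [Real.rpow_pos_of_pos (two_pos (α := ℝ)) (-((k:ℝ)+1))])
  have hsub2 : Metric.ball (0 : Eu N) (r * (1 - t)) ⊆ Metric.ball 0 r :=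
    Metric.ball_subset_ball (by nlinarith)
  calc volume (Metric.ball (0 : Eu N) (r * (1 - 2 ^ (-((k:ℝ) + 1))))
        \ Metric.ball (0 : Eu N) (r * (1 - t)))
      ≤ volume (Metric.ball (0 : Eu N) r \ Metric.ball (0 : Eu N) (r * (1 - t))) := by
        exact measure_mono (diff_subset_diff_left hsub1)
    _ = volume (Metric.ball (0 : Eu N) r) - volume (Metric.ball (0 : Eu N) (r * (1 - t))) := by
        exact measure_diff hsub2 measurableSet_ball.nullMeasurableSet measure_ball_lt_top.ne
    _ ≤ ENNReal.ofReal (r ^ (N:ℕ) * ((N:ℝ) * t)) * volume (Metric.ball (0 : Eu N) 1) := by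
        rw [Measure.addHaar_ball volume (0 : Eu N) (r := r) hr.le,
          Measure.addHaar_ball volume (0 : Eu N) (r := r * (1 - t)) (by nlinarith),
          finrank_euclideanSpace_fin]
        rw [tsub_le_iff_right, ← add_mul, ← ENNReal.ofReal_add (by positivity)
          (pow_nonneg (by nlinarith) N)]
        refine mul_le_mul_left (ENNReal.ofReal_le_ofReal ?_) _
        have hbern : 1 - (N:ℝ) * t ≤ (1 - t) ^ (N:ℕ) := by
          have := one_add_mul_le_pow (a := -t) (by linarith) N
          calc 1 - (N:ℝ) * t = 1 + (N:ℝ) * (-t) := by ring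
            _ ≤ (1 + -t) ^ (N:ℕ) := this
            _ = (1 - t) ^ (N:ℕ) := by ring_nf
        have h1t : (0:ℝ) ≤ 1 - t := by linarith
        rw [mul_pow]
        nlinarith [pow_nonneg hr.le N, pow_nonneg h1t N]

lemma key2 {s r : ℝ} (hr : 0 < r) (hs : 0 < s) (k : ℕ) :
    (r * 2 ^ (-((k:ℝ) + 1))) ^ (-s) * (r ^ (N:ℕ) * ((N:ℝ) * 2 ^ (-(k:ℝ))))
      = (r ^ (-s) * r ^ (N:ℕ) * (N:ℝ) * 2 ^ s) * ((2:ℝ) ^ (s - 1)) ^ (k:ℕ) := by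
  have h2 : (0:ℝ) < 2 := two_pos
  have hb : (0:ℝ) < 2 ^ (-((k:ℝ) + 1)) := Real.rpow_pos_of_pos h2 _
  calc (r * 2 ^ (-((k:ℝ) + 1))) ^ (-s) * (r ^ (N:ℕ) * ((N:ℝ) * 2 ^ (-(k:ℝ))))
      = (r ^ (-s) * (2:ℝ) ^ (-((k:ℝ) + 1) * (-s))) * (r ^ (N:ℕ) * ((N:ℝ) * 2 ^ (-(k:ℝ)))) := by
        rw [Real.mul_rpow hr.le hb.le, ← Real.rpow_mul h2.le]
    _ = (r ^ (-s) * r ^ (N:ℕ) * (N:ℝ)) * ((2:ℝ) ^ (-((k:ℝ) + 1) * (-s)) * 2 ^ (-(k:ℝ))) := by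
        ring
    _ = (r ^ (-s) * r ^ (N:ℕ) * (N:ℝ)) * ((2:ℝ) ^ (s + (s - 1) * (k:ℝ))) := by
        rw [← Real.rpow_add h2]
        congr 2
        ring
    _ = (r ^ (-s) * r ^ (N:ℕ) * (N:ℝ) * 2 ^ s) * ((2:ℝ) ^ (s - 1)) ^ (k:ℕ) := by
        rw [Real.rpow_add h2, ← Real.rpow_natCast ((2:ℝ) ^ (s - 1)) k, ← Real.rpow_mul h2.le]
        ring

lemma fracPer_ball_lt_top (hN : 0 < N) {s : ℝ} (hs : 0 < s) (hs1 : s < 1) {r : ℝ} (hr : 0 < r) :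
    fracPer N s (Metric.ball (0 : Eu N) r) < ⊤ := by
  have hnt := eu_nontrivial hN
  set B := Metric.ball (0 : Eu N) r with hB
  set Sh : ℕ → Set (Eu N) := fun k =>
    Metric.ball (0 : Eu N) (r * (1 - 2 ^ (-((k:ℝ) + 1))))
      \ Metric.ball (0 : Eu N) (r * (1 - 2 ^ (-(k:ℝ)))) with hSh
  have hδpos : ∀ k : ℕ, (0:ℝ) < r * 2 ^ (-((k:ℝ) + 1)) := fun k => by positivity
  have hinner : ∀ k : ℕ, ∀ x ∈ Sh k,
      (∫⁻ y in Bᶜ, fracKer N s (x - y))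
        ≤ tailC N s * ENNReal.ofReal ((r * 2 ^ (-((k:ℝ) + 1))) ^ (-s)) := by
    intro k x hx
    have hxn : ‖x‖ < r * (1 - 2 ^ (-((k:ℝ) + 1))) := mem_ball_zero_iff.mp hx.1
    have hsubB : Metric.ball x (r * 2 ^ (-((k:ℝ) + 1))) ⊆ B := by
      intro z hz
      rw [hB, mem_ball_zero_iff]
      calc ‖z‖ = ‖x + (z - x)‖ := by congr 1; abel
        _ ≤ ‖x‖ + ‖z - x‖ := norm_add_le _ _
        _ < r * (1 - 2 ^ (-((k:ℝ) + 1))) + r * 2 ^ (-((k:ℝ) + 1)) := by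
            have : ‖z - x‖ < r * 2 ^ (-((k:ℝ) + 1)) := by
              rw [← dist_eq_norm]; exact Metric.mem_ball.mp hz
            linarith
        _ = r := by ring
    refine le_trans ?_ (tail_bound hN hs x (hδpos k))
    exact lintegral_mono' (Measure.restrict_mono (compl_subset_compl.mpr hsubB) le_rfl) le_rfl
  have hq : ENNReal.ofReal ((2:ℝ) ^ (s - 1)) < 1 := by
    rw [← ENNReal.ofReal_one]
    exact (ENNReal.ofReal_lt_ofReal_iff_of_nonneg (by positivity)).mpr
      (Real.rpow_lt_one_of_one_lt_of_neg one_lt_two (by linarith))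
  calc fracPer N s B ≤ ∫⁻ x in ⋃ k, Sh k, ∫⁻ y in Bᶜ, fracKer N s (x - y) := by
        unfold fracPer
        exact lintegral_mono' (Measure.restrict_mono (ball_cover hr) le_rfl) le_rfl
    _ ≤ ∑' k : ℕ, ∫⁻ x in Sh k, ∫⁻ y in Bᶜ, fracKer N s (x - y) := lintegral_iUnion_le _ _
    _ ≤ ∑' k : ℕ, (tailC N s * ENNReal.ofReal ((r * 2 ^ (-((k:ℝ) + 1))) ^ (-s))) * volume (Sh k) := by
        refine ENNReal.tsum_le_tsum fun k => ?_
        exact (setLIntegral_mono (measurable_const) (hinner k)).trans_eq (setLIntegral_const _ _)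
    _ ≤ ∑' k : ℕ, (tailC N s * ENNReal.ofReal ((r * 2 ^ (-((k:ℝ) + 1))) ^ (-s)))
          * (ENNReal.ofReal (r ^ (N:ℕ) * ((N:ℝ) * 2 ^ (-(k:ℝ))))
             * volume (Metric.ball (0 : Eu N) 1)) := by
        exact ENNReal.tsum_le_tsum fun k => mul_le_mul_right (annulus_vol hN hr k) _
    _ = ∑' k : ℕ, (tailC N s * volume (Metric.ball (0 : Eu N) 1)
          * ENNReal.ofReal (r ^ (-s) * r ^ (N:ℕ) * (N:ℝ) * 2 ^ s))
          * ENNReal.ofReal ((2:ℝ) ^ (s - 1)) ^ (k:ℕ) := by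
        refine tsum_congr fun k => ?_
        have hsplit : ENNReal.ofReal ((r * 2 ^ (-((k:ℝ) + 1))) ^ (-s))
            * ENNReal.ofReal (r ^ (N:ℕ) * ((N:ℝ) * 2 ^ (-(k:ℝ))))
            = ENNReal.ofReal (r ^ (-s) * r ^ (N:ℕ) * (N:ℝ) * 2 ^ s)
              * ENNReal.ofReal ((2:ℝ) ^ (s - 1)) ^ (k:ℕ) := by
          rw [← ENNReal.ofReal_mul (by positivity), key2 hr hs k,
            ENNReal.ofReal_mul (by positivity), ← ENNReal.ofReal_pow (by positivity)]
        calc (tailC N s * ENNReal.ofReal ((r * 2 ^ (-((k:ℝ) + 1))) ^ (-s)))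
              * (ENNReal.ofReal (r ^ (N:ℕ) * ((N:ℝ) * 2 ^ (-(k:ℝ))))
                 * volume (Metric.ball (0 : Eu N) 1))
            = tailC N s * volume (Metric.ball (0 : Eu N) 1)
              * (ENNReal.ofReal ((r * 2 ^ (-((k:ℝ) + 1))) ^ (-s))
                 * ENNReal.ofReal (r ^ (N:ℕ) * ((N:ℝ) * 2 ^ (-(k:ℝ))))) := by ring
          _ = _ := by rw [hsplit]; ring
    _ = (tailC N s * volume (Metric.ball (0 : Eu N) 1)
          * ENNReal.ofReal (r ^ (-s) * r ^ (N:ℕ) * (N:ℝ) * 2 ^ s))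
          * (1 - ENNReal.ofReal ((2:ℝ) ^ (s - 1)))⁻¹ := by
        rw [ENNReal.tsum_mul_left, ENNReal.tsum_geometric]
    _ < ⊤ := by
        refine ENNReal.mul_lt_top ?_ ?_
        · exact ENNReal.mul_lt_top (ENNReal.mul_lt_top (tailC_lt_top hs) measure_ball_lt_top)
            ofReal_lt_top
        · refine ENNReal.inv_lt_top.mpr (pos_iff_ne_zero.mpr ?_)
          simp only [ne_eq, tsub_eq_zero_iff_le, not_le]
          exact hq

lemma rpow_invN_pow (hN : 0 < N) {a : ℝ} (ha : 0 < a) :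
    ((a ^ ((N:ℝ)⁻¹)) : ℝ) ^ (N:ℕ) = a := by
  rw [← Real.rpow_natCast (a ^ ((N:ℝ)⁻¹)) N, ← Real.rpow_mul ha.le,
    inv_mul_cancel₀ (by exact_mod_cast hN.ne'), Real.rpow_one]

lemma exists_ball_vol (hN : 0 < N) {m : ℝ} (hm : 0 < m) :
    ∃ r : ℝ, 0 < r ∧ volume (Metric.ball (0 : Eu N) r) = ENNReal.ofReal m := by
  have := eu_nontrivial hN
  have hb0 : 0 < volume (Metric.ball (0 : Eu N) 1) := Metric.measure_ball_pos _ _ one_pos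
  have hbt : volume (Metric.ball (0 : Eu N) 1) ≠ ⊤ := measure_ball_lt_top.ne
  set b : ℝ := (volume (Metric.ball (0 : Eu N) 1)).toReal with hbdef
  have hb : 0 < b := ENNReal.toReal_pos hb0.ne' hbt
  refine ⟨(m / b) ^ ((N:ℝ)⁻¹), Real.rpow_pos_of_pos (div_pos hm hb) _, ?_⟩
  rw [Measure.addHaar_ball volume (0 : Eu N)
      (Real.rpow_pos_of_pos (div_pos hm hb) _).le, finrank_euclideanSpace_fin,
    rpow_invN_pow hN (div_pos hm hb), ← ENNReal.ofReal_toReal hbt, ← hbdef,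
    ← ENNReal.ofReal_mul (by positivity), div_mul_cancel₀ _ hb.ne']

lemma ae_comp_sub_left {g g' : Eu N → ℝ} (hgg' : g =ᵐ[volume] g') (x : Eu N) :
    (fun y => g (x - y)) =ᵐ[volume] fun y => g' (x - y) :=
  (Measure.measurePreserving_sub_left volume x).quasiMeasurePreserving.ae_eq_comp hgg'

lemma riesz_eq_dint {g g' : Eu N → ℝ} (hgg' : g =ᵐ[volume] g') (F : Set (Eu N)) :
    rieszPot N g F = dint (fun z => ENNReal.ofReal (g' z)) F F := by
  rw [dint_def]
  unfold rieszPot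
  refine lintegral_congr fun x => ?_
  refine lintegral_congr_ae (ae_restrict_of_ae ?_)
  filter_upwards [ae_comp_sub_left hgg' x] with y hy
  rw [hy]

lemma ae_smul {c : ℝ} (hc : c ≠ 0) {p : Eu N → Prop} (h : ∀ᵐ z, p z) :
    ∀ᵐ z : Eu N, p (c • z) :=
  (Measure.quasiMeasurePreserving_smul volume hc).ae h

lemma ae_sub_left {p : Eu N → Prop} (h : ∀ᵐ z, p z) (x : Eu N) :
    ∀ᵐ y : Eu N, p (x - y) :=
  (Measure.measurePreserving_sub_left volume x).quasiMeasurePreserving.ae h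

lemma ofReal_le_add_sub (a b : ℝ) :
    ENNReal.ofReal a ≤ ENNReal.ofReal b + ENNReal.ofReal (a - b) := by
  rcases le_total a b with h | h
  · exact (ENNReal.ofReal_le_ofReal h).trans le_self_add
  · calc ENNReal.ofReal a = ENNReal.ofReal (b + (a - b)) := by ring_nf
      _ ≤ _ := ENNReal.ofReal_add_le

end AM

set_option maxHeartbeats 1000000 in
/-- Λ-minimality: there exists a penalization constant `μ₀ > 0` for which every
volume-constrained minimizer `E` of `ℰ_{s,g} = P_s + V_g` minimizes the penalized functional,
and satisfies `P_s(E) ≤ P_s(F) + (2‖g‖_{L¹} + μ₀)|E Δ F|` for every bounded measurable `F`. -/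
theorem almost_minimality (N : ℕ) (s : ℝ) (hs : s ∈ Set.Ioo (0:ℝ) 1) (m : ℝ) (hm : 0 < m)
    (g : EuclideanSpace ℝ (Fin N) → ℝ)
    (hg0 : ∀ x : EuclideanSpace ℝ (Fin N), x ≠ 0 → 0 ≤ g x)
    (hgmono : ∀ x : EuclideanSpace ℝ (Fin N), x ≠ 0 → ∀ l : ℝ, 1 ≤ l → g (l • x) ≤ g x)
    (hgsymm : ∀ x : EuclideanSpace ℝ (Fin N), x ≠ 0 → g (-x) = g x)
    (hgint : Integrable g volume) :
    ∃ μ₀ : ℝ, 0 < μ₀ ∧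
      ∀ E : Set (EuclideanSpace ℝ (Fin N)), MeasurableSet E → volume E = ENNReal.ofReal m →
        (∀ F : Set (EuclideanSpace ℝ (Fin N)), MeasurableSet F → volume F = ENNReal.ofReal m →
          fracPer N s E + rieszPot N g E ≤ fracPer N s F + rieszPot N g F) →
        (∀ F : Set (EuclideanSpace ℝ (Fin N)), MeasurableSet F →
          fracPer N s E + rieszPot N g E
            ≤ fracPer N s F + rieszPot N g F + penalty N μ₀ m F)
        ∧ ∀ F : Set (EuclideanSpace ℝ (Fin N)), Bornology.IsBounded F → MeasurableSet F →
            fracPer N s E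
              ≤ fracPer N s F
                + ENNReal.ofReal (2 * (∫ x, g x) + μ₀) * volume (symmDiff E F) := by
  classical
  rcases Nat.eq_zero_or_pos N with hN0 | hN
  · -- the degenerate case N = 0
    subst hN0
    haveI hsub : Subsingleton (EuclideanSpace ℝ (Fin 0)) :=
      ⟨fun a b => PiLp.ext fun i => i.elim0⟩
    refine ⟨|g 0| * m + 1, by positivity, ?_⟩
    intro E hE hEvol _hmin
    have hEuniv : E = univ := by
      rcases E.eq_empty_or_nonempty with rfl | hne
      · rw [measure_empty] at hEvol
        have := ENNReal.ofReal_pos.mpr hm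
        rw [← hEvol] at this
        exact absurd this (lt_irrefl 0)
      · exact eq_univ_of_forall fun x => by
          obtain ⟨y, hy⟩ := hne; rwa [Subsingleton.elim x y]
    have hvoluniv : volume (univ : Set (EuclideanSpace ℝ (Fin 0))) = ENNReal.ofReal m := by
      rw [← hEuniv]; exact hEvol
    have hfracE : fracPer 0 s E = 0 := by
      rw [hEuniv]; unfold fracPer; simp
    have hrE : rieszPot 0 g E
        = ENNReal.ofReal (g 0) * ENNReal.ofReal m * ENNReal.ofReal m := by
      unfold rieszPot
      rw [hEuniv]
      have hxy : ∀ x y : EuclideanSpace ℝ (Fin 0), g (x - y) = g 0 := fun x y => by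
        rw [Subsingleton.elim (x - y) 0]
      simp only [hxy]
      rw [setLIntegral_const, setLIntegral_const, hvoluniv]
    constructor
    · intro F hF
      rcases F.eq_empty_or_nonempty with rfl | hFne
      · have hfracF : fracPer 0 s (∅ : Set (EuclideanSpace ℝ (Fin 0))) = 0 := by
          unfold fracPer; simp
        have hrieszF : rieszPot 0 g (∅ : Set (EuclideanSpace ℝ (Fin 0))) = 0 := by
          unfold rieszPot; simp
        rw [hfracE, hrE, zero_add, hfracF, hrieszF, zero_add, zero_add]
        unfold penalty
        rw [measure_empty, zero_tsub, tsub_zero, zero_add]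
        refine mul_le_mul_left ?_ _
        calc ENNReal.ofReal (g 0) * ENNReal.ofReal m
            ≤ ENNReal.ofReal |g 0| * ENNReal.ofReal m :=
              mul_le_mul_left (ENNReal.ofReal_le_ofReal (le_abs_self _)) _
          _ = ENNReal.ofReal (|g 0| * m) := (ENNReal.ofReal_mul (abs_nonneg _)).symm
          _ ≤ ENNReal.ofReal (|g 0| * m + 1) := ENNReal.ofReal_le_ofReal (by linarith)
      · have hFuniv : F = univ := eq_univ_of_forall fun x => by
          obtain ⟨y, hy⟩ := hFne; rwa [Subsingleton.elim x y]
        rw [hFuniv, ← hEuniv]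
        exact le_self_add
    · intro F _hFb _hF
      rw [hfracE]
      exact zero_le
  · -- the main case 0 < N
    haveI hnt : Nontrivial (EuclideanSpace ℝ (Fin N)) := AM.eu_nontrivial hN
    have hs0 : 0 < s := hs.1
    have hs1 : s < 1 := hs.2
    have hgsm := hgint.aestronglyMeasurable
    set g' : EuclideanSpace ℝ (Fin N) → ℝ := hgsm.mk g with hg'def
    have hg'meas : Measurable g' := hgsm.stronglyMeasurable_mk.measurable
    have hgg' : g =ᵐ[volume] g' := hgsm.ae_eq_mk
    have hzero_ae : ∀ᵐ x : EuclideanSpace ℝ (Fin N), x ≠ 0 := by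
      haveI : NullSingletonClass (volume : Measure (EuclideanSpace ℝ (Fin N))) := by infer_instance
      have h1 : {x : EuclideanSpace ℝ (Fin N) | ¬ x ≠ 0} = {0} := by ext x; simp
      rw [ae_iff, h1]
      exact measure_singleton 0
    have hg'0 : ∀ᵐ z : EuclideanSpace ℝ (Fin N), 0 ≤ g' z := by
      filter_upwards [hzero_ae, hgg'] with z h1 h2
      rw [← h2]; exact hg0 z h1
    have hg'int : Integrable g' volume := hgint.congr hgg'
    set I : ℝ := ∫ x, g x with hIdef
    have hInn : 0 ≤ I := by
      rw [hIdef]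
      refine integral_nonneg_of_ae ?_
      filter_upwards [hzero_ae] with z h1
      exact hg0 z h1
    set k : EuclideanSpace ℝ (Fin N) → ℝ≥0∞ := fun z => ENNReal.ofReal (g' z) with hkdef
    have hkmeas : Measurable k := hg'meas.ennreal_ofReal
    have hktot : ∫⁻ z, k z = ENNReal.ofReal I := by
      rw [hkdef]
      rw [← ofReal_integral_eq_lintegral_ofReal hg'int hg'0, hIdef]
      congr 1
      exact (integral_congr_ae hgg').symm
    have hre : ∀ X : Set (EuclideanSpace ℝ (Fin N)), rieszPot N g X = AM.dint k X X :=
      fun X => AM.riesz_eq_dint hgg' X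
    obtain ⟨r, hr, hrvol⟩ := AM.exists_ball_vol hN hm
    set B : Set (EuclideanSpace ℝ (Fin N)) := Metric.ball 0 r with hBdef
    have hBmeas : MeasurableSet B := measurableSet_ball
    have hBfin : fracPer N s B + rieszPot N g B ≠ ⊤ := by
      refine (ENNReal.add_lt_top.mpr ⟨AM.fracPer_ball_lt_top hN hs0 hs1 hr, ?_⟩).ne
      rw [hre B]
      refine lt_of_le_of_lt (AM.dint_le_vol_left hkmeas B B) ?_
      rw [hktot, hrvol]
      exact ENNReal.mul_lt_top ofReal_lt_top ofReal_lt_top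
    set C : ℝ := (fracPer N s B + rieszPot N g B).toReal with hCdef
    have hC0 : 0 ≤ C := ENNReal.toReal_nonneg
    have hCB : fracPer N s B + rieszPot N g B = ENNReal.ofReal C := by
      rw [hCdef, ENNReal.ofReal_toReal hBfin]
    have hX0 : (0:ℝ) ≤ 10 * C / m := div_nonneg (by linarith) hm.le
    set μ₀ : ℝ := I + 10 * C / m + 1 with hμdef
    have hμpos : 0 < μ₀ := by rw [hμdef]; linarith
    refine ⟨μ₀, hμpos, ?_⟩
    intro E hE hEvol hmin
    have hpart1 : ∀ F : Set (EuclideanSpace ℝ (Fin N)), MeasurableSet F →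
        fracPer N s E + rieszPot N g E
          ≤ fracPer N s F + rieszPot N g F + penalty N μ₀ m F := by
      intro F hF
      rcases eq_or_ne (volume F) (ENNReal.ofReal m) with hFm | hFm
      · exact (hmin F hF hFm).trans le_self_add
      rcases eq_or_ne (volume F) ⊤ with hFtop | hFtop
      · have hpen : penalty N μ₀ m F = ⊤ := by
          unfold penalty
          rw [hFtop, ENNReal.sub_eq_top_iff.mpr ⟨rfl, ofReal_ne_top⟩, top_add]
          exact ENNReal.mul_top (ENNReal.ofReal_pos.mpr hμpos).ne'
        rw [hpen, add_top]
        exact le_top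
      set m' : ℝ := (volume F).toReal with hm'def
      have hm'0 : 0 ≤ m' := ENNReal.toReal_nonneg
      have hvF : volume F = ENNReal.ofReal m' := (ENNReal.ofReal_toReal hFtop).symm
      have hm'm : m' ≠ m := by
        intro h; exact hFm (by rw [hvF, h])
      have hEleC : fracPer N s E + rieszPot N g E ≤ ENNReal.ofReal C := by
        rw [← hCB]; exact hmin B hBmeas hrvol
      rcases lt_or_gt_of_ne hm'm with hlt | hgt
      · -- volume F smaller than m
        by_cases hsmall : m' ≤ m / 2
        · have h5 : 5 * C ≤ 10 * C / m * (m - m') := by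
            have h51 := mul_le_mul_of_nonneg_left (show m / 2 ≤ m - m' by linarith) hX0
            calc 5 * C = 10 * C / m * (m / 2) := by field_simp; ring
              _ ≤ _ := h51
          have hCr : C ≤ μ₀ * (m - m') := by
            rw [hμdef]
            nlinarith [mul_nonneg (show (0:ℝ) ≤ I + 1 by linarith)
              (show (0:ℝ) ≤ m - m' by linarith)]
          calc fracPer N s E + rieszPot N g E ≤ ENNReal.ofReal C := hEleC
            _ ≤ ENNReal.ofReal (μ₀ * (m - m')) := ENNReal.ofReal_le_ofReal hCr
            _ = ENNReal.ofReal μ₀ * ENNReal.ofReal (m - m') := ENNReal.ofReal_mul hμpos.le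
            _ = ENNReal.ofReal μ₀ * (ENNReal.ofReal m - volume F) := by
                rw [hvF, ENNReal.ofReal_sub m hm'0]
            _ ≤ penalty N μ₀ m F := by
                unfold penalty
                exact mul_le_mul_right le_add_self _
            _ ≤ fracPer N s F + rieszPot N g F + penalty N μ₀ m F := le_add_self
        · push_neg at hsmall
          have hm'pos : 0 < m' := by linarith
          by_cases hEF : fracPer N s E + rieszPot N g E ≤ fracPer N s F + rieszPot N g F
          · exact hEF.trans le_self_add
          push_neg at hEF
          have hFC : fracPer N s F + rieszPot N g F ≤ ENNReal.ofReal C :=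
            hEF.le.trans hEleC
          set lam : ℝ := (m / m') ^ ((N:ℝ)⁻¹) with hlamdef
          have hlampos : 0 < lam := Real.rpow_pos_of_pos (div_pos hm hm'pos) _
          have hdiv1 : 1 ≤ m / m' := (one_le_div hm'pos).mpr hlt.le
          have hlam1 : 1 ≤ lam := Real.one_le_rpow hdiv1 (by positivity)
          set c : ℝ := lam⁻¹ with hcdef
          have hcpos : 0 < c := inv_pos.mpr hlampos
          have hcne : c ≠ 0 := hcpos.ne'
          have hcinv : c⁻¹ = lam := by rw [hcdef, inv_inv]
          have hlamN : lam ^ (N:ℕ) = m / m' := AM.rpow_invN_pow hN (div_pos hm hm'pos)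
          have habs : |((c ^ N)⁻¹ : ℝ)| = lam ^ (N:ℕ) := by
            rw [hcdef, inv_pow, inv_inv, abs_of_pos (pow_pos hlampos N)]
          set G : Set (EuclideanSpace ℝ (Fin N)) := (c • ·) ⁻¹' F with hGdef
          have hGmeas : MeasurableSet G := hF.preimage (measurable_const_smul c)
          have hGvol : volume G = ENNReal.ofReal m := by
            rw [hGdef, Measure.addHaar_preimage_smul volume hcne, finrank_euclideanSpace_fin,
              habs, hvF, hlamN, ← ENNReal.ofReal_mul (by positivity),
              div_mul_cancel₀ _ hm'pos.ne']
          have hEG := hmin G hGmeas hGvol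
          have hPG : fracPer N s G = ENNReal.ofReal (c ^ (s - (N:ℝ))) * fracPer N s F := by
            rw [hGdef]; exact AM.fracPer_smul hs0 hcpos hF
          have hRG : rieszPot N g G
              = (ENNReal.ofReal (lam ^ (N:ℕ))) ^ 2 * AM.dint (fun z => k (lam • z)) F F := by
            rw [hre G, hGdef, AM.dint_smul hcne hkmeas hF hF, habs]
            simp only [hcinv]
          have hklam : AM.dint (fun z => k (lam • z)) F F ≤ AM.dint k F F := by
            have hae : ∀ᵐ z : EuclideanSpace ℝ (Fin N), g' (lam • z) ≤ g' z := by
              filter_upwards [hzero_ae, hgg', AM.ae_smul hlampos.ne' hgg'] with z h0 h1 h2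
              rw [← h1, ← h2]
              exact hgmono z h0 lam hlam1
            rw [AM.dint_def, AM.dint_def]
            refine lintegral_mono fun x => ?_
            refine lintegral_mono_ae (ae_restrict_of_ae ?_)
            filter_upwards [AM.ae_sub_left hae x] with y hy
            exact ENNReal.ofReal_le_ofReal hy
          set Q : ℝ := (m / m') ^ 2 with hQdef
          have hQ1 : 1 ≤ Q := by nlinarith
          have hco1 : ENNReal.ofReal (c ^ (s - (N:ℝ))) ≤ ENNReal.ofReal Q := by
            refine ENNReal.ofReal_le_ofReal ?_
            have h1 : c ^ (s - (N:ℝ)) = lam ^ ((N:ℝ) - s) := by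
              rw [hcdef, Real.inv_rpow hlampos.le, ← Real.rpow_neg hlampos.le, neg_sub]
            have h2 : Q = lam ^ (((N * 2 : ℕ)):ℝ) := by
              rw [Real.rpow_natCast, pow_mul, hlamN, hQdef]
            rw [h1, h2]
            refine Real.rpow_le_rpow_of_exponent_le hlam1 ?_
            push_cast
            have : (0:ℝ) ≤ (N:ℝ) := Nat.cast_nonneg N
            linarith
          have hco2 : (ENNReal.ofReal (lam ^ (N:ℕ))) ^ 2 = ENNReal.ofReal Q := by
            rw [← ENNReal.ofReal_pow (by positivity), hQdef]
            congr 1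
            rw [← hlamN]
          have hchain : fracPer N s E + rieszPot N g E
              ≤ ENNReal.ofReal Q * (fracPer N s F + rieszPot N g F) := by
            calc fracPer N s E + rieszPot N g E ≤ fracPer N s G + rieszPot N g G := hEG
              _ = ENNReal.ofReal (c ^ (s - (N:ℝ))) * fracPer N s F
                  + (ENNReal.ofReal (lam ^ (N:ℕ))) ^ 2
                    * AM.dint (fun z => k (lam • z)) F F := by
                  rw [hPG, hRG]
              _ ≤ ENNReal.ofReal Q * fracPer N s F + ENNReal.ofReal Q * AM.dint k F F := by
                  refine add_le_add (mul_le_mul_left hco1 _) ?_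
                  rw [hco2]
                  exact mul_le_mul_right hklam _
              _ = ENNReal.ofReal Q * (fracPer N s F + rieszPot N g F) := by
                  rw [hre F, mul_add]
          have hQsplit : ENNReal.ofReal Q = 1 + ENNReal.ofReal (Q - 1) := by
            rw [← ENNReal.ofReal_one, ← ENNReal.ofReal_add (by norm_num) (by linarith)]
            norm_num
          have hreal : (Q - 1) * C ≤ μ₀ * (m - m') := by
            have hm'ne : m' ≠ 0 := hm'pos.ne'
            have e1 : Q - 1 = (m ^ 2 - m' ^ 2) / m' ^ 2 := by
              rw [hQdef]; field_simp
            have hm2 : m ≤ 2 * m' := by linarith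
            have e2 : (m ^ 2 - m' ^ 2) / m' ^ 2 ≤ 8 * (m - m') / m := by
              rw [div_le_div_iff₀ (by positivity) hm]
              have f1 : m * m ≤ (2 * m') * (2 * m') :=
                mul_le_mul hm2 hm2 hm.le (by linarith)
              have f2 : m * m' ≤ 2 * m' * m' := mul_le_mul_of_nonneg_right hm2 hm'pos.le
              have h1 : (m ^ 2 - m' ^ 2) * m = (m - m') * (m * (m + m')) := by ring
              have h2 : 8 * (m - m') * m' ^ 2 = (m - m') * (8 * m' ^ 2) := by ring
              rw [h1, h2]
              refine mul_le_mul_of_nonneg_left ?_ (by linarith)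
              nlinarith [f1, f2]
            have e3 : (Q - 1) * C ≤ (8 * (m - m') / m) * C := by
              rw [e1]; exact mul_le_mul_of_nonneg_right e2 hC0
            have e5 : 8 * C / m ≤ μ₀ := by
              rw [hμdef]
              have h85 : 8 * C / m ≤ 10 * C / m := by gcongr <;> linarith
              linarith
            calc (Q - 1) * C ≤ (8 * (m - m') / m) * C := e3
              _ = (8 * C / m) * (m - m') := by ring
              _ ≤ μ₀ * (m - m') := mul_le_mul_of_nonneg_right e5 (by linarith)
          calc fracPer N s E + rieszPot N g E
              ≤ ENNReal.ofReal Q * (fracPer N s F + rieszPot N g F) := hchain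
            _ = (fracPer N s F + rieszPot N g F)
                + ENNReal.ofReal (Q - 1) * (fracPer N s F + rieszPot N g F) := by
                rw [hQsplit, add_mul, one_mul]
            _ ≤ (fracPer N s F + rieszPot N g F)
                + ENNReal.ofReal (Q - 1) * ENNReal.ofReal C :=
                add_le_add_right (mul_le_mul_right hFC _) _
            _ ≤ fracPer N s F + rieszPot N g F + penalty N μ₀ m F := by
                refine add_le_add_right ?_ _
                calc ENNReal.ofReal (Q - 1) * ENNReal.ofReal C
                    = ENNReal.ofReal ((Q - 1) * C) :=
                      (ENNReal.ofReal_mul (by linarith)).symm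
                  _ ≤ ENNReal.ofReal (μ₀ * (m - m')) := ENNReal.ofReal_le_ofReal hreal
                  _ = ENNReal.ofReal μ₀ * ENNReal.ofReal (m - m') :=
                      ENNReal.ofReal_mul hμpos.le
                  _ = ENNReal.ofReal μ₀ * (ENNReal.ofReal m - volume F) := by
                      rw [hvF, ENNReal.ofReal_sub m hm'0]
                  _ ≤ penalty N μ₀ m F := by
                      unfold penalty
                      exact mul_le_mul_right le_add_self _
      · -- volume F bigger than m
        have hm'pos : 0 < m' := lt_trans hm hgt
        set lam : ℝ := (m / m') ^ ((N:ℝ)⁻¹) with hlamdef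
        have hlampos : 0 < lam := Real.rpow_pos_of_pos (div_pos hm hm'pos) _
        have hlamne : lam ≠ 0 := hlampos.ne'
        have hdivle1 : m / m' ≤ 1 := (div_le_one hm'pos).mpr hgt.le
        have hlam1 : lam ≤ 1 := Real.rpow_le_one (by positivity) hdivle1 (by positivity)
        set c : ℝ := lam⁻¹ with hcdef
        have hcpos : 0 < c := inv_pos.mpr hlampos
        have hcne : c ≠ 0 := hcpos.ne'
        have hcinv : c⁻¹ = lam := by rw [hcdef, inv_inv]
        have hmul1 : c * lam = 1 := inv_mul_cancel₀ hlamne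
        have hcge1 : 1 ≤ c := by nlinarith
        have hlamN : lam ^ (N:ℕ) = m / m' := AM.rpow_invN_pow hN (div_pos hm hm'pos)
        have habs : |((c ^ N)⁻¹ : ℝ)| = lam ^ (N:ℕ) := by
          rw [hcdef, inv_pow, inv_inv, abs_of_pos (pow_pos hlampos N)]
        set G : Set (EuclideanSpace ℝ (Fin N)) := (c • ·) ⁻¹' F with hGdef
        have hGmeas : MeasurableSet G := hF.preimage (measurable_const_smul c)
        have hGvol : volume G = ENNReal.ofReal m := by
          rw [hGdef, Measure.addHaar_preimage_smul volume hcne, finrank_euclideanSpace_fin,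
            habs, hvF, hlamN, ← ENNReal.ofReal_mul (by positivity),
            div_mul_cancel₀ _ hm'pos.ne']
        have hEG := hmin G hGmeas hGvol
        have hPG : fracPer N s G ≤ fracPer N s F := by
          rw [hGdef, AM.fracPer_smul hs0 hcpos hF]
          have hle1 : ENNReal.ofReal (c ^ (s - (N:ℝ))) ≤ 1 := by
            refine ENNReal.ofReal_le_one.mpr ?_
            refine Real.rpow_le_one_of_one_le_of_nonpos hcge1 ?_
            have h1 : (1:ℝ) ≤ (N:ℝ) := by exact_mod_cast hN
            linarith
          calc ENNReal.ofReal (c ^ (s - (N:ℝ))) * fracPer N s F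
              ≤ 1 * fracPer N s F := mul_le_mul_left hle1 _
            _ = fracPer N s F := one_mul _
        have hRG : rieszPot N g G
            = (ENNReal.ofReal (lam ^ (N:ℕ))) ^ 2 * AM.dint (fun z => k (lam • z)) F F := by
          rw [hre G, hGdef, AM.dint_smul hcne hkmeas hF hF, habs]
          simp only [hcinv]
        have hpow1 : lam ^ (N:ℕ) ≤ 1 := pow_le_one₀ hlampos.le hlam1
        have hpowpos : 0 < lam ^ (N:ℕ) := pow_pos hlampos N
        have hinv1 : 1 ≤ (lam ^ (N:ℕ))⁻¹ := by
          have hq := inv_pos.mpr hpowpos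
          have hqm : (lam ^ (N:ℕ))⁻¹ * (lam ^ (N:ℕ)) = 1 := inv_mul_cancel₀ hpowpos.ne'
          nlinarith
        set h2fun : EuclideanSpace ℝ (Fin N) → ℝ≥0∞ :=
          fun z => ENNReal.ofReal (g' (lam • z) - g' z) with hh2def
        have hh2meas : Measurable h2fun :=
          ((hg'meas.comp (measurable_id.const_smul lam)).sub hg'meas).ennreal_ofReal
        have hptle : ∀ z : EuclideanSpace ℝ (Fin N), k (lam • z) ≤ k z + h2fun z :=
          fun z => AM.ofReal_le_add_sub _ _
        have hmono2 : ∀ᵐ z : EuclideanSpace ℝ (Fin N), g' z ≤ g' (lam • z) ∧ 0 ≤ g' z := by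
          filter_upwards [hzero_ae, hgg', AM.ae_smul hlamne hgg', hg'0] with z h0 h1 h2 h3
          refine ⟨?_, h3⟩
          rw [← h1, ← h2]
          have := hgmono (lam • z) (smul_ne_zero hlamne h0) c hcge1
          rwa [smul_smul, hmul1, one_smul] at this
        have hCh : ∫⁻ z, h2fun z = ENNReal.ofReal (I * ((lam ^ (N:ℕ))⁻¹ - 1)) := by
          have hid : ∀ᵐ z : EuclideanSpace ℝ (Fin N),
              ENNReal.ofReal (g' (lam • z)) = k z + h2fun z := by
            filter_upwards [hmono2] with z hz
            rw [hkdef, hh2def]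
            rw [← ENNReal.ofReal_add hz.2 (by linarith [hz.1])]
            congr 1
            ring
          have hlhs : ∫⁻ z, ENNReal.ofReal (g' (lam • z))
              = ENNReal.ofReal ((lam ^ (N:ℕ))⁻¹) * ENNReal.ofReal I := by
            have hsc := AM.lint_smul hlamne hkmeas
            rw [hkdef] at hsc
            rw [hsc, hktot]
            congr 2
            rw [abs_inv, abs_of_pos hpowpos]
          have hrhs : ∫⁻ z, (k z + h2fun z) = ENNReal.ofReal I + ∫⁻ z, h2fun z := by
            rw [lintegral_add_left hkmeas, hktot]
          have heq : ENNReal.ofReal I + ∫⁻ z, h2fun z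
              = ENNReal.ofReal ((lam ^ (N:ℕ))⁻¹) * ENNReal.ofReal I := by
            rw [← hrhs, ← hlhs]
            exact (lintegral_congr_ae hid).symm
          have htarget : ENNReal.ofReal I + ENNReal.ofReal (I * ((lam ^ (N:ℕ))⁻¹ - 1))
              = ENNReal.ofReal ((lam ^ (N:ℕ))⁻¹) * ENNReal.ofReal I := by
            rw [← ENNReal.ofReal_mul (by positivity),
              ← ENNReal.ofReal_add hInn (mul_nonneg hInn (by linarith))]
            congr 1
            ring
          exact (ENNReal.add_right_inj ofReal_ne_top).mp (heq.trans htarget.symm)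
        have hdle : AM.dint (fun z => k (lam • z)) F F
            ≤ AM.dint k F F + ENNReal.ofReal (I * ((lam ^ (N:ℕ))⁻¹ - 1)) * volume F := by
          calc AM.dint (fun z => k (lam • z)) F F
              ≤ AM.dint (fun z => k z + h2fun z) F F := AM.dint_le_dint hptle F F
            _ = AM.dint k F F + AM.dint h2fun F F := AM.dint_add hkmeas hh2meas F F
            _ ≤ AM.dint k F F
                + ENNReal.ofReal (I * ((lam ^ (N:ℕ))⁻¹ - 1)) * volume F := by
                refine add_le_add_right ?_ _
                refine (AM.dint_le_vol_left hh2meas F F).trans_eq ?_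
                rw [hCh]
        have hd2le1 : (ENNReal.ofReal (lam ^ (N:ℕ))) ^ 2 ≤ 1 := by
          rw [← ENNReal.ofReal_pow (by positivity), ← ENNReal.ofReal_one]
          refine ENNReal.ofReal_le_ofReal ?_
          nlinarith
        have hbnn : (0:ℝ) ≤ I * ((lam ^ (N:ℕ))⁻¹ - 1) := mul_nonneg hInn (by linarith)
        have hextra : (ENNReal.ofReal (lam ^ (N:ℕ))) ^ 2
            * (ENNReal.ofReal (I * ((lam ^ (N:ℕ))⁻¹ - 1)) * volume F)
            ≤ ENNReal.ofReal (I * (m' - m)) := by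
          rw [hvF, ← ENNReal.ofReal_pow (by positivity), ← ENNReal.ofReal_mul hbnn,
            ← ENNReal.ofReal_mul (by positivity)]
          refine ENNReal.ofReal_le_ofReal ?_
          rw [hlamN]
          have hm'ne : m' ≠ 0 := hm'pos.ne'
          have hmne : m ≠ 0 := hm.ne'
          have e : (m / m') ^ 2 * (I * ((m / m')⁻¹ - 1) * m') = (I * (m' - m)) * (m / m') := by
            field_simp
          rw [e]
          calc (I * (m' - m)) * (m / m') ≤ (I * (m' - m)) * 1 :=
              mul_le_mul_of_nonneg_left hdivle1 (mul_nonneg hInn (by linarith))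
            _ = I * (m' - m) := mul_one _
        have hVG : rieszPot N g G ≤ rieszPot N g F + ENNReal.ofReal (I * (m' - m)) := by
          rw [hRG, hre F]
          calc (ENNReal.ofReal (lam ^ (N:ℕ))) ^ 2 * AM.dint (fun z => k (lam • z)) F F
              ≤ (ENNReal.ofReal (lam ^ (N:ℕ))) ^ 2
                * (AM.dint k F F + ENNReal.ofReal (I * ((lam ^ (N:ℕ))⁻¹ - 1)) * volume F) :=
                mul_le_mul_right hdle _
            _ = (ENNReal.ofReal (lam ^ (N:ℕ))) ^ 2 * AM.dint k F F
                + (ENNReal.ofReal (lam ^ (N:ℕ))) ^ 2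
                  * (ENNReal.ofReal (I * ((lam ^ (N:ℕ))⁻¹ - 1)) * volume F) := by
                rw [mul_add]
            _ ≤ 1 * AM.dint k F F + ENNReal.ofReal (I * (m' - m)) :=
                add_le_add (mul_le_mul_left hd2le1 _) hextra
            _ = AM.dint k F F + ENNReal.ofReal (I * (m' - m)) := by rw [one_mul]
        calc fracPer N s E + rieszPot N g E ≤ fracPer N s G + rieszPot N g G := hEG
          _ ≤ fracPer N s F + (rieszPot N g F + ENNReal.ofReal (I * (m' - m))) :=
              add_le_add hPG hVG
          _ = fracPer N s F + rieszPot N g F + ENNReal.ofReal (I * (m' - m)) := by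
              rw [add_assoc]
          _ ≤ fracPer N s F + rieszPot N g F + penalty N μ₀ m F := by
              refine add_le_add_right ?_ _
              have hIμ2 : ENNReal.ofReal (I * (m' - m)) ≤ ENNReal.ofReal (μ₀ * (m' - m)) := by
                refine ENNReal.ofReal_le_ofReal ?_
                have hIμ : I ≤ μ₀ := by rw [hμdef]; linarith
                exact mul_le_mul_of_nonneg_right hIμ (by linarith)
              calc ENNReal.ofReal (I * (m' - m)) ≤ ENNReal.ofReal (μ₀ * (m' - m)) := hIμ2
                _ = ENNReal.ofReal μ₀ * ENNReal.ofReal (m' - m) := ENNReal.ofReal_mul hμpos.le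
                _ = ENNReal.ofReal μ₀ * (volume F - ENNReal.ofReal m) := by
                    rw [hvF, ENNReal.ofReal_sub m' hm.le]
                _ ≤ penalty N μ₀ m F := by
                    unfold penalty
                    exact mul_le_mul_right le_self_add _
    refine ⟨hpart1, ?_⟩
    intro F _hFb hF
    have h1 := hpart1 F hF
    have hVEfin : rieszPot N g E ≠ ⊤ := by
      rw [hre E]
      refine ((AM.dint_le_vol_left hkmeas E E).trans_lt ?_).ne
      rw [hktot, hEvol]
      exact ENNReal.mul_lt_top ofReal_lt_top ofReal_lt_top
    set Δ : ℝ≥0∞ := volume (symmDiff E F) with hΔdef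
    have hsymm : symmDiff E F = (E \ F) ∪ (F \ E) := by
      rw [Set.symmDiff_def]
    have hFdiffE : volume (F \ E) ≤ Δ := by
      rw [hΔdef, hsymm]; exact measure_mono subset_union_right
    have hVF : rieszPot N g F ≤ rieszPot N g E + ENNReal.ofReal (2 * I) * Δ := by
      rw [hre F, hre E]
      have hsplitF : F = (F ∩ E) ∪ (F \ E) := (Set.inter_union_diff F E).symm
      calc AM.dint k F F = AM.dint k ((F ∩ E) ∪ (F \ E)) F := by rw [← hsplitF]
        _ ≤ AM.dint k (F ∩ E) F + AM.dint k (F \ E) F := AM.dint_union_left _ _ _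
        _ ≤ (AM.dint k (F ∩ E) (F ∩ E) + AM.dint k (F ∩ E) (F \ E))
            + AM.dint k (F \ E) F := by
            refine add_le_add_left ?_ _
            calc AM.dint k (F ∩ E) F = AM.dint k (F ∩ E) ((F ∩ E) ∪ (F \ E)) := by
                  rw [← hsplitF]
              _ ≤ _ := AM.dint_union_right hkmeas _ _ _
        _ ≤ (AM.dint k E E + ENNReal.ofReal I * volume (F \ E))
            + ENNReal.ofReal I * volume (F \ E) := by
            refine add_le_add (add_le_add ?_ ?_) ?_
            · exact AM.dint_mono inter_subset_right inter_subset_right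
            · refine (AM.dint_le_vol_right hkmeas _ _).trans_eq ?_
              rw [hktot]
            · refine (AM.dint_le_vol_left hkmeas _ _).trans_eq ?_
              rw [hktot]
        _ ≤ AM.dint k E E + ENNReal.ofReal (2 * I) * Δ := by
            rw [add_assoc]
            refine add_le_add_right ?_ _
            have h2I : ENNReal.ofReal (2 * I) = ENNReal.ofReal I + ENNReal.ofReal I := by
              rw [← ENNReal.ofReal_add hInn hInn]; congr 1; ring
            rw [h2I, add_mul]
            exact add_le_add (mul_le_mul_right hFdiffE _) (mul_le_mul_right hFdiffE _)
    have hpen : penalty N μ₀ m F ≤ ENNReal.ofReal μ₀ * Δ := by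
      unfold penalty
      refine mul_le_mul_right ?_ _
      rw [← hEvol]
      have hdisj : Disjoint (E \ F) (F \ E) := disjoint_sdiff_sdiff
      have hvolΔ : Δ = volume (E \ F) + volume (F \ E) := by
        rw [hΔdef, hsymm, measure_union hdisj (hF.diff hE)]
      have h1' : volume F - volume E ≤ volume (F \ E) := by
        refine tsub_le_iff_right.mpr ?_
        calc volume F ≤ volume ((F \ E) ∪ E) := measure_mono (subset_diff_union F E)
          _ ≤ volume (F \ E) + volume E := measure_union_le _ _
      have h2' : volume E - volume F ≤ volume (E \ F) := by
        refine tsub_le_iff_right.mpr ?_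
        calc volume E ≤ volume ((E \ F) ∪ F) := measure_mono (subset_diff_union E F)
          _ ≤ volume (E \ F) + volume F := measure_union_le _ _
      rw [hvolΔ]
      calc (volume F - volume E) + (volume E - volume F)
          ≤ volume (F \ E) + volume (E \ F) := add_le_add h1' h2'
        _ = volume (E \ F) + volume (F \ E) := by ring
    have hconst : ENNReal.ofReal (2 * I) * Δ + ENNReal.ofReal μ₀ * Δ
        = ENNReal.ofReal (2 * I + μ₀) * Δ := by
      rw [← add_mul, ← ENNReal.ofReal_add (by linarith) hμpos.le]
    have h2 : fracPer N s E + rieszPot N g E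
        ≤ (fracPer N s F + ENNReal.ofReal (2 * I + μ₀) * Δ) + rieszPot N g E := by
      calc fracPer N s E + rieszPot N g E
          ≤ fracPer N s F + rieszPot N g F + penalty N μ₀ m F := h1
        _ ≤ fracPer N s F + (rieszPot N g E + ENNReal.ofReal (2 * I) * Δ)
            + ENNReal.ofReal μ₀ * Δ := add_le_add (add_le_add_right hVF _) hpen
        _ = (fracPer N s F + (ENNReal.ofReal (2 * I) * Δ + ENNReal.ofReal μ₀ * Δ))
            + rieszPot N g E := by ring
        _ = (fracPer N s F + ENNReal.ofReal (2 * I + μ₀) * Δ) + rieszPot N g E := by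
            rw [hconst]
    exact (ENNReal.add_le_add_iff_right hVEfin).mp h2
end
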